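/- arXiv:1304.5831 — 3 statements merged into one kernel-verified Lean document; each statement's English description precedes it below -/
import Mathlib

section
/- Let (f,g) ∈ 𝒜. Then the semigroup ⟨f,g⟩₊ acting on I=[0,1] has a unique minimal set K; moreover K equals the closure of the orbit O₊(0) of 0 and also equals the closure of the orbit O₊(1) of 1. -/
open Set Function MeasureTheory

noncomputable section

namespace IFSPaper

/-- The closed unit interval `I = [0,1]` as a subset of `ℝ`. -/
def unitI : Set ℝ := Set.Icc 0 1

/-- Membership in the class `𝒜`: `f, g : I → I` are `C¹` diffeomorphisms onto their
images with `f 0 = 0`, `g 1 = 1`, `f x < x < g x` on `(0,1)` and `0 < g 0 < f 1 < 1`. -/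
structure MemA (f g : ℝ → ℝ) : Prop where
  f_maps : Set.MapsTo f unitI unitI
  g_maps : Set.MapsTo g unitI unitI
  f_c1 : ContDiff ℝ 1 f
  g_c1 : ContDiff ℝ 1 g
  f_inj : Set.InjOn f unitI
  g_inj : Set.InjOn g unitI
  f_deriv_ne : ∀ x ∈ unitI, deriv f x ≠ 0
  g_deriv_ne : ∀ x ∈ unitI, deriv g x ≠ 0
  f_zero : f 0 = 0
  g_one : g 1 = 1
  f_lt_id : ∀ x ∈ Set.Ioo (0:ℝ) 1, f x < x
  id_lt_g : ∀ x ∈ Set.Ioo (0:ℝ) 1, x < g x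
  g0_pos : 0 < g 0
  g0_lt_f1 : g 0 < f 1
  f1_lt_one : f 1 < 1

/-- The element of the semigroup `⟨f,g⟩₊` associated to a word in the two generators
(`true ↦ f`, `false ↦ g`). -/
def word (f g : ℝ → ℝ) : List Bool → ℝ → ℝ
  | [] => id
  | b :: t => (if b then f else g) ∘ word f g t

/-- The semigroup orbit `O₊(x) = {φ x : φ ∈ ⟨f,g⟩₊}` of a point `x`. -/
def orbitP (f g : ℝ → ℝ) (x : ℝ) : Set ℝ :=
  {y | ∃ w : List Bool, w ≠ [] ∧ word f g w x = y}

/-- `K` is a minimal set for the action of `⟨f,g⟩₊` on `I`. -/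
def IsMinimalSet (f g : ℝ → ℝ) (K : Set ℝ) : Prop :=
  K.Nonempty ∧ K ⊆ unitI ∧ ∀ x ∈ K, closure (orbitP f g x) = K

/-- The overlapping region `W = [g 0, f 1]`. -/
def ovW (f g : ℝ → ℝ) : Set ℝ := Set.Icc (g 0) (f 1)

/-- The fundamental domain `Fₙ = [f^[n+1] 1, f^[n] 1]`. -/
def Fint (f : ℝ → ℝ) (n : ℕ) : Set ℝ := Set.Icc (f^[n+1] 1) (f^[n] 1)

/-- The fundamental domain `Gₙ = [g^[n] 0, g^[n+1] 0]`. -/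
def Gint (g : ℝ → ℝ) (n : ℕ) : Set ℝ := Set.Icc (g^[n] 0) (g^[n+1] 0)

/-- Single overlapping property `So`: `f² 1 < g 0` and `f 1 < g² 0`. -/
def So (f g : ℝ → ℝ) : Prop := f (f 1) < g 0 ∧ f 1 < g (g 0)

/-- A (nonempty) closed bounded interval. -/
def IsClosedInterval (A : Set ℝ) : Prop := ∃ a b : ℝ, a ≤ b ∧ A = Set.Icc a b

/-- A closed bounded interval with nonempty interior. -/
def IsNondegClosedInterval (A : Set ℝ) : Prop := ∃ a b : ℝ, a < b ∧ A = Set.Icc a b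

/-- A nonempty open bounded interval. -/
def IsOpenInterval (J : Set ℝ) : Prop := ∃ a b : ℝ, a < b ∧ J = Set.Ioo a b

/-- Hole property `Ho` witnessed by the pair of holes `(Hf, Hg)`. -/
def HoleAt (f g : ℝ → ℝ) (Hf Hg : Set ℝ) : Prop :=
  IsNondegClosedInterval Hf ∧ IsNondegClosedInterval Hg ∧
  Hf ⊆ interior (Fint f 1 \ ovW f g) ∧
  Hg ⊆ interior (Gint g 1 \ ovW f g) ∧
  g '' Hf = Hg ∧ f '' Hg = Hf

/-- Hole property `Ho`. -/
def Ho (f g : ℝ → ℝ) : Prop := ∃ Hf Hg : Set ℝ, HoleAt f g Hf Hg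

/-- The induced (first-return) map `𝓕 : F₁ \ {f 1} → G₁`,
`𝓕 x = g^[-n x] (f⁻¹ x)` where `n x` is least with `g^[-n x] (f⁻¹ x) ∈ G₁`. -/
def calF (f g : ℝ → ℝ) (x : ℝ) : ℝ :=
  (Function.invFunOn g unitI)^[sInf {n : ℕ |
      (Function.invFunOn g unitI)^[n] (Function.invFunOn f unitI x) ∈ Gint g 1}]
    (Function.invFunOn f unitI x)

/-- The induced (first-return) map `𝓖 : G₁ \ {g 0} → F₁`. -/
def calG (f g : ℝ → ℝ) (x : ℝ) : ℝ :=
  (Function.invFunOn f unitI)^[sInf {n : ℕ |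
      (Function.invFunOn f unitI)^[n] (Function.invFunOn g unitI x) ∈ Fint f 1}]
    (Function.invFunOn g unitI x)

/-- Eventual expansion property `Ee`: `𝓕` is uniformly expanding outside `Hf`
and `𝓖` outside `Hg` (at all points where the derivative makes sense). -/
def Ee (f g : ℝ → ℝ) (Hf Hg : Set ℝ) : Prop :=
  ∃ μ : ℝ, 1 < μ ∧
    (∀ y ∈ Fint f 1 \ Hf, DifferentiableAt ℝ (calF f g) y → μ < deriv (calF f g) y) ∧
    (∀ y ∈ Gint g 1 \ Hg, DifferentiableAt ℝ (calG f g) y → μ < deriv (calG f g) y)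

/-- The ruination region `R_f = 𝓕⁻¹(Hg) ⊆ F₁`. -/
def Rf (f g : ℝ → ℝ) (Hg : Set ℝ) : Set ℝ :=
  {x | x ∈ Fint f 1 \ {f 1} ∧ calF f g x ∈ Hg}

/-- The ruination region `R_g = 𝓖⁻¹(Hf) ⊆ G₁`. -/
def Rg (f g : ℝ → ℝ) (Hf : Set ℝ) : Set ℝ :=
  {x | x ∈ Gint g 1 \ {g 0} ∧ calG f g x ∈ Hf}

/-- Castration property `Ca`: `W ⊆ int R_f ∪ int R_g`. -/
def Ca (f g : ℝ → ℝ) (Hf Hg : Set ℝ) : Prop :=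
  ovW f g ⊆ interior (Rf f g Hg) ∪ interior (Rg f g Hf)

/-- Membership in the class `𝒞` with the given holes `(Hf, Hg)`:
`(f,g) ∈ 𝒜` together with `So`, `Ho`, `Ee` and `Ca`. -/
def MemC (f g : ℝ → ℝ) (Hf Hg : Set ℝ) : Prop :=
  MemA f g ∧ So f g ∧ HoleAt f g Hf Hg ∧ Ee f g Hf Hg ∧ Ca f g Hf Hg

/-- The interval `I₋₁ = [0, 1/3 - ε]` of the appendix example. -/
def Im1 (ε : ℝ) : Set ℝ := Set.Icc 0 (1/3 - ε)

/-- The interval `I₀ = [1/3 + ε, 2/3 - ε]` of the appendix example. -/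
def Iz (ε : ℝ) : Set ℝ := Set.Icc (1/3 + ε) (2/3 - ε)

/-- The interval `I₁ = [2/3 + ε, 1]` of the appendix example. -/
def Ip1 (ε : ℝ) : Set ℝ := Set.Icc (2/3 + ε) 1

/-- The inclusion property of the appendix example. -/
def InclusionProp (f g : ℝ → ℝ) (ε : ℝ) : Prop :=
  f '' Im1 ε ⊆ Im1 ε ∧ f '' Iz ε ⊆ interior (Im1 ε) ∧ f '' Ip1 ε ⊆ interior (Iz ε) ∧
  g '' Ip1 ε ⊆ Ip1 ε ∧ g '' Iz ε ⊆ interior (Ip1 ε) ∧ g '' Im1 ε ⊆ interior (Iz ε)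

/-- The strong uniform contraction property of the appendix example. -/
def StrongContraction (f g : ℝ → ℝ) (ε lam : ℝ) : Prop :=
  ∀ x ∈ Im1 ε ∪ Iz ε ∪ Ip1 ε, deriv f x < lam ∧ deriv g x < lam

lemma word_mapsTo (f g : ℝ → ℝ) (hA : MemA f g) (w : List Bool) :
    Set.MapsTo (word f g w) unitI unitI := by
  induction w with
  | nil => exact Set.mapsTo_id _
  | cons b t ih =>
    intro x hx
    have h := ih hx
    cases b
    · exact hA.g_maps h
    · exact hA.f_maps h

lemma word_continuous (f g : ℝ → ℝ) (hA : MemA f g) (w : List Bool) :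
    Continuous (word f g w) := by
  induction w with
  | nil => exact continuous_id
  | cons b t ih =>
    cases b
    · simpa [word] using hA.g_c1.continuous.comp ih
    · simpa [word] using hA.f_c1.continuous.comp ih

lemma word_append (f g : ℝ → ℝ) (w v : List Bool) (x : ℝ) :
    word f g (w ++ v) x = word f g w (word f g v x) := by
  induction w with
  | nil => rfl
  | cons b t ih => simp [word, ih]

lemma word_replicate_true (f g : ℝ → ℝ) (n : ℕ) (x : ℝ) :
    word f g (List.replicate n true) x = f^[n] x := by
  induction n with
  | zero => rfl
  | succ n ih =>
    simp [List.replicate_succ, word, ih, Function.iterate_succ_apply']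

lemma word_replicate_false (f g : ℝ → ℝ) (n : ℕ) (x : ℝ) :
    word f g (List.replicate n false) x = g^[n] x := by
  induction n with
  | zero => rfl
  | succ n ih =>
    simp [List.replicate_succ, word, ih, Function.iterate_succ_apply']

lemma orbit_subset_unitI (f g : ℝ → ℝ) (hA : MemA f g) {x : ℝ} (hx : x ∈ unitI) :
    orbitP f g x ⊆ unitI := by
  rintro _ ⟨w, -, rfl⟩
  exact word_mapsTo f g hA w hx

lemma closure_orbit_mono (f g : ℝ → ℝ) (hA : MemA f g) {x y : ℝ}
    (hy : y ∈ closure (orbitP f g x)) :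
    closure (orbitP f g y) ⊆ closure (orbitP f g x) := by
  refine closure_minimal ?_ isClosed_closure
  rintro _ ⟨w, hw, rfl⟩
  have h2 : word f g w '' closure (orbitP f g x)
      ⊆ closure (word f g w '' orbitP f g x) :=
    image_closure_subset_closure_image (word_continuous f g hA w)
  refine closure_mono ?_ (h2 ⟨y, hy, rfl⟩)
  rintro _ ⟨u, ⟨v, hv, rfl⟩, rfl⟩
  exact ⟨w ++ v, by simp [hw], word_append f g w v x⟩

lemma zero_mem_closure_orbit (f g : ℝ → ℝ) (hA : MemA f g) {x : ℝ} (hx : x ∈ unitI) :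
    (0 : ℝ) ∈ closure (orbitP f g x) := by
  have f_le : ∀ y ∈ unitI, f y ≤ y := by
    intro y hy
    rcases eq_or_lt_of_le hy.1 with h0 | h0
    · rw [← h0, hA.f_zero]
    rcases eq_or_lt_of_le hy.2 with h1 | h1
    · rw [h1]; exact hA.f1_lt_one.le
    · exact (hA.f_lt_id y ⟨h0, h1⟩).le
  set seq : ℕ → ℝ := fun n => f^[n] x with hseq
  have hmem : ∀ n, seq n ∈ unitI := by
    intro n
    induction n with
    | zero => exact hx
    | succ n ih =>
      have : seq (n + 1) = f (seq n) := Function.iterate_succ_apply' f n x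
      rw [this]; exact hA.f_maps ih
  have hanti : Antitone seq := by
    refine antitone_nat_of_succ_le fun n => ?_
    have : seq (n + 1) = f (seq n) := Function.iterate_succ_apply' f n x
    rw [this]; exact f_le _ (hmem n)
  have hbdd : BddBelow (Set.range seq) := ⟨0, by rintro _ ⟨n, rfl⟩; exact (hmem n).1⟩
  set L : ℝ := ⨅ n, seq n with hLdef
  have hL : Filter.Tendsto seq Filter.atTop (nhds L) := tendsto_atTop_ciInf hanti hbdd
  have hLmem : L ∈ unitI := by
    have : IsClosed unitI := isClosed_Icc
    exact this.mem_of_tendsto hL (Filter.Eventually.of_forall hmem)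
  have hshift : Filter.Tendsto (fun n => seq (n + 1)) Filter.atTop (nhds L) :=
    hL.comp (Filter.tendsto_add_atTop_nat 1)
  have hfix : f L = L := by
    have h1 : Filter.Tendsto (fun n => f (seq n)) Filter.atTop (nhds (f L)) :=
      (hA.f_c1.continuous.tendsto L).comp hL
    have h2 : (fun n => f (seq n)) = fun n => seq (n + 1) :=
      funext fun n => (Function.iterate_succ_apply' f n x).symm
    rw [h2] at h1
    exact tendsto_nhds_unique h1 hshift
  have hfx1 : f x < 1 := by
    rcases eq_or_lt_of_le hx.2 with h | h
    · rw [h]; exact hA.f1_lt_one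
    · exact lt_of_le_of_lt (f_le x hx) h
  have hL1 : L < 1 := by
    have h1 : L ≤ seq 1 := ciInf_le hbdd 1
    have : seq 1 = f x := by simp [hseq]
    rw [this] at h1
    exact lt_of_le_of_lt h1 hfx1
  have hL0 : L = 0 := by
    by_contra hne
    have hpos : 0 < L := lt_of_le_of_ne hLmem.1 (Ne.symm hne)
    exact absurd hfix (ne_of_lt (hA.f_lt_id L ⟨hpos, hL1⟩))
  rw [← hL0]
  refine mem_closure_of_tendsto hshift ?_
  filter_upwards with n
  exact ⟨List.replicate (n + 1) true, by simp, word_replicate_true f g (n + 1) x⟩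

lemma one_mem_closure_orbit (f g : ℝ → ℝ) (hA : MemA f g) {x : ℝ} (hx : x ∈ unitI) :
    (1 : ℝ) ∈ closure (orbitP f g x) := by
  have g_ge : ∀ y ∈ unitI, y ≤ g y := by
    intro y hy
    rcases eq_or_lt_of_le hy.2 with h1 | h1
    · rw [h1, hA.g_one]
    rcases eq_or_lt_of_le hy.1 with h0 | h0
    · rw [← h0]; exact hA.g0_pos.le
    · exact (hA.id_lt_g y ⟨h0, h1⟩).le
  set seq : ℕ → ℝ := fun n => g^[n] x with hseq
  have hmem : ∀ n, seq n ∈ unitI := by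
    intro n
    induction n with
    | zero => exact hx
    | succ n ih =>
      have : seq (n + 1) = g (seq n) := Function.iterate_succ_apply' g n x
      rw [this]; exact hA.g_maps ih
  have hmono : Monotone seq := by
    refine monotone_nat_of_le_succ fun n => ?_
    have : seq (n + 1) = g (seq n) := Function.iterate_succ_apply' g n x
    rw [this]; exact g_ge _ (hmem n)
  have hbdd : BddAbove (Set.range seq) := ⟨1, by rintro _ ⟨n, rfl⟩; exact (hmem n).2⟩
  set L : ℝ := ⨆ n, seq n with hLdef
  have hL : Filter.Tendsto seq Filter.atTop (nhds L) := tendsto_atTop_ciSup hmono hbdd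
  have hLmem : L ∈ unitI := by
    have : IsClosed unitI := isClosed_Icc
    exact this.mem_of_tendsto hL (Filter.Eventually.of_forall hmem)
  have hshift : Filter.Tendsto (fun n => seq (n + 1)) Filter.atTop (nhds L) :=
    hL.comp (Filter.tendsto_add_atTop_nat 1)
  have hfix : g L = L := by
    have h1 : Filter.Tendsto (fun n => g (seq n)) Filter.atTop (nhds (g L)) :=
      (hA.g_c1.continuous.tendsto L).comp hL
    have h2 : (fun n => g (seq n)) = fun n => seq (n + 1) :=
      funext fun n => (Function.iterate_succ_apply' g n x).symm
    rw [h2] at h1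
    exact tendsto_nhds_unique h1 hshift
  have hgx0 : 0 < g x := by
    rcases eq_or_lt_of_le hx.1 with h | h
    · rw [← h]; exact hA.g0_pos
    · exact lt_of_lt_of_le h (g_ge x hx)
  have hL0 : 0 < L := by
    have h1 : seq 1 ≤ L := le_ciSup hbdd 1
    have : seq 1 = g x := by simp [hseq]
    rw [this] at h1
    exact lt_of_lt_of_le hgx0 h1
  have hL1 : L = 1 := by
    by_contra hne
    have hlt : L < 1 := lt_of_le_of_ne hLmem.2 hne
    exact absurd hfix (ne_of_gt (hA.id_lt_g L ⟨hL0, hlt⟩))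
  rw [← hL1]
  refine mem_closure_of_tendsto hshift ?_
  filter_upwards with n
  exact ⟨List.replicate (n + 1) false, by simp, word_replicate_false f g (n + 1) x⟩

/-- every `(f,g) ∈ 𝒜` has a unique minimal set `K`, and moreover
`K = closure O₊(0) = closure O₊(1)`. -/
theorem unique_minimal_set (f g : ℝ → ℝ) (hA : MemA f g) :
    ∃ K : Set ℝ, IsMinimalSet f g K ∧
      (∀ K' : Set ℝ, IsMinimalSet f g K' → K' = K) ∧
      K = closure (orbitP f g 0) ∧ K = closure (orbitP f g 1) := by
  have h0I : (0 : ℝ) ∈ unitI := ⟨le_refl 0, zero_le_one⟩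
  have h1I : (1 : ℝ) ∈ unitI := ⟨zero_le_one, le_refl 1⟩
  refine ⟨closure (orbitP f g 0), ?_, ?_, rfl, ?_⟩
  · refine ⟨⟨0, subset_closure ⟨[true], by simp, by simp [word, hA.f_zero]⟩⟩, ?_, ?_⟩
    · exact closure_minimal (orbit_subset_unitI f g hA h0I) isClosed_Icc
    · intro x hxK
      refine Subset.antisymm (closure_orbit_mono f g hA hxK) ?_
      have hxI : x ∈ unitI :=
        closure_minimal (orbit_subset_unitI f g hA h0I) isClosed_Icc hxK
      exact closure_orbit_mono f g hA (zero_mem_closure_orbit f g hA hxI)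
  · rintro K' ⟨⟨x, hx⟩, hK'I, hcl⟩
    have h0K' : (0 : ℝ) ∈ K' := by
      rw [← hcl x hx]
      exact zero_mem_closure_orbit f g hA (hK'I hx)
    exact (hcl 0 h0K').symm
  · exact Subset.antisymm
      (closure_orbit_mono f g hA (zero_mem_closure_orbit f g hA h1I))
      (closure_orbit_mono f g hA (one_mem_closure_orbit f g hA h0I))

end IFSPaper
end
end

section
/- Let (f,g) ∈ 𝒜 satisfy the single overlapping property (So) and the hole property (Ho), with hole intervals H_f, H_g. Then the unique minimal set K of ⟨f,g⟩₊ satisfies K ⊆ I \ int(H_f ∪ H_g); in particular K does not coincide with the whole interval I. -/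
open Set Function MeasureTheory

noncomputable section

namespace IFSPaper

/-- A `C¹` map on `[0,1]` with nonvanishing derivative and `f 0 < f 1` is
strictly increasing on `[0,1]`. -/
private lemma strictMonoOn_unitI {f : ℝ → ℝ} (h1 : ContDiff ℝ 1 f)
    (hne : ∀ x ∈ unitI, deriv f x ≠ 0) (hlt : f 0 < f 1) :
    StrictMonoOn f unitI := by
  have hcd : Continuous (deriv f) := h1.continuous_deriv le_rfl
  obtain ⟨c, hc, hderiv⟩ := exists_deriv_eq_slope f (show (0:ℝ) < 1 by norm_num)
    h1.continuous.continuousOn (h1.differentiable one_ne_zero).differentiableOn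
  have hcI : c ∈ unitI := ⟨hc.1.le, hc.2.le⟩
  have hcpos : 0 < deriv f c := by
    rw [hderiv]
    have : 0 < f 1 - f 0 := sub_pos.mpr hlt
    have h10 : (1:ℝ) - 0 = 1 := by norm_num
    rw [h10, div_one]
    exact this
  have hpos : ∀ x ∈ unitI, 0 < deriv f x := by
    intro x hx
    rcases lt_or_gt_of_ne (hne x hx) with hneg | hposx
    · exfalso
      rcases lt_or_ge x c with hxc | hcx
      · obtain ⟨z, hz, hz0⟩ := intermediate_value_Icc hxc.le hcd.continuousOn
          (show (0:ℝ) ∈ Icc (deriv f x) (deriv f c) from ⟨hneg.le, hcpos.le⟩)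
        exact hne z ⟨hx.1.trans hz.1, hz.2.trans hcI.2⟩ hz0
      · obtain ⟨z, hz, hz0⟩ := intermediate_value_Icc' hcx hcd.continuousOn
          (show (0:ℝ) ∈ Icc (deriv f x) (deriv f c) from ⟨hneg.le, hcpos.le⟩)
        exact hne z ⟨hcI.1.trans hz.1, hz.2.trans hx.2⟩ hz0
    · exact hposx
  have : StrictMonoOn f (Icc (0:ℝ) 1) :=
    strictMonoOn_of_deriv_pos (convex_Icc 0 1) h1.continuous.continuousOn
      (fun x hx => hpos x (by rw [interior_Icc] at hx; exact ⟨hx.1.le, hx.2.le⟩))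
  exact this

/-- if `(f,g) ∈ 𝒜` satisfies `So` and `Ho` with holes `Hf, Hg`, then the
minimal set `K` is contained in `I \ int (Hf ∪ Hg)`; in particular `K ≠ I`. -/
theorem minimal_set_avoids_holes (f g : ℝ → ℝ) (Hf Hg K : Set ℝ)
    (hA : MemA f g) (hSo : So f g) (hHo : HoleAt f g Hf Hg)
    (hK : IsMinimalSet f g K) :
    K ⊆ unitI \ interior (Hf ∪ Hg) ∧ K ≠ unitI := by
  classical
  obtain ⟨⟨a, b, hab, hHfE⟩, ⟨c, d, hcd, hHgE⟩, hHfsub, hHgsub, hgHf, hfHg⟩ := hHo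
  subst hHfE; subst hHgE
  obtain ⟨hKne, hKI, hmin⟩ := hK
  -- basic membership facts
  have h1I : (1:ℝ) ∈ unitI := ⟨zero_le_one, le_rfl⟩
  have h0I : (0:ℝ) ∈ unitI := ⟨le_rfl, zero_le_one⟩
  have hf1I : f 1 ∈ unitI := hA.f_maps h1I
  have hf2I : f (f 1) ∈ unitI := hA.f_maps hf1I
  have hg0I : g 0 ∈ unitI := hA.g_maps h0I
  have hg2I : g (g 0) ∈ unitI := hA.g_maps hg0I
  -- monotonicity
  have hfm : StrictMonoOn f unitI := strictMonoOn_unitI hA.f_c1 hA.f_deriv_ne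
    (by rw [hA.f_zero]; linarith [hA.g0_pos, hA.g0_lt_f1])
  have hgm : StrictMonoOn g unitI := strictMonoOn_unitI hA.g_c1 hA.g_deriv_ne
    (by rw [hA.g_one]; linarith [hA.g0_lt_f1, hA.f1_lt_one])
  have hfmo : MonotoneOn f unitI := hfm.monotoneOn
  have hgmo : MonotoneOn g unitI := hgm.monotoneOn
  -- the hole intervals: compute Fint f 1 and Gint g 1
  have hFint : Fint f 1 = Icc (f (f 1)) (f 1) := by
    simp [Fint, Function.iterate_succ, Function.iterate_one]
  have hGint : Gint g 1 = Icc (g 0) (g (g 0)) := by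
    simp [Gint, Function.iterate_succ, Function.iterate_one]
  -- bounds for the holes
  have hHfb : ∀ y ∈ Icc a b, f (f 1) < y ∧ y < g 0 := by
    intro y hy
    have h1 : y ∈ interior (Fint f 1 \ ovW f g) := hHfsub hy
    have h2 : y ∈ interior (Fint f 1) := interior_mono diff_subset h1
    rw [hFint, interior_Icc] at h2
    have h3 : y ∉ ovW f g := (interior_subset h1).2
    refine ⟨h2.1, ?_⟩
    by_contra hcon
    exact h3 ⟨le_of_not_gt hcon, h2.2.le⟩
  have hHgb : ∀ y ∈ Icc c d, f 1 < y ∧ y < g (g 0) := by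
    intro y hy
    have h1 : y ∈ interior (Gint g 1 \ ovW f g) := hHgsub hy
    have h2 : y ∈ interior (Gint g 1) := interior_mono diff_subset h1
    rw [hGint, interior_Icc] at h2
    have h3 : y ∉ ovW f g := (interior_subset h1).2
    refine ⟨?_, h2.2⟩
    by_contra hcon
    exact h3 ⟨h2.1.le, le_of_not_gt hcon⟩
  have haM : a ∈ Icc a b := ⟨le_rfl, hab.le⟩
  have hbM : b ∈ Icc a b := ⟨hab.le, le_rfl⟩
  have hcM : c ∈ Icc c d := ⟨le_rfl, hcd.le⟩
  have hdM : d ∈ Icc c d := ⟨hcd.le, le_rfl⟩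
  obtain ⟨ha1, ha2⟩ := hHfb a haM
  obtain ⟨hb1, hb2⟩ := hHfb b hbM
  obtain ⟨hc1, hc2⟩ := hHgb c hcM
  obtain ⟨hd1, hd2⟩ := hHgb d hdM
  -- holes are inside the unit interval
  have hHfI : ∀ y ∈ Icc a b, y ∈ unitI := by
    intro y hy
    obtain ⟨hy1, hy2⟩ := hHfb y hy
    exact ⟨le_trans hf2I.1 hy1.le, le_trans hy2.le hg0I.2⟩
  have hHgI : ∀ y ∈ Icc c d, y ∈ unitI := by
    intro y hy
    obtain ⟨hy1, hy2⟩ := hHgb y hy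
    exact ⟨le_trans hf1I.1 hy1.le, le_trans hy2.le hg2I.2⟩
  have haI := hHfI a haM
  have hbI := hHfI b hbM
  have hcI := hHgI c hcM
  have hdI := hHgI d hdM
  -- endpoint identities
  have hfc : f c = a := by
    have haim : a ∈ f '' Icc c d := hfHg ▸ haM
    obtain ⟨z, hz, hfz⟩ := haim
    have h1 : f c ≤ f z := hfmo hcI (hHgI z hz) hz.1
    have h2 : f c ∈ Icc a b := hfHg ▸ ⟨c, hcM, rfl⟩
    exact le_antisymm (hfz ▸ h1) h2.1
  have hfd : f d = b := by
    have hbim : b ∈ f '' Icc c d := hfHg ▸ hbM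
    obtain ⟨z, hz, hfz⟩ := hbim
    have h1 : f z ≤ f d := hfmo (hHgI z hz) hdI hz.2
    have h2 : f d ∈ Icc a b := hfHg ▸ ⟨d, hdM, rfl⟩
    exact le_antisymm h2.2 (hfz ▸ h1)
  have hga : g a = c := by
    have hcim : c ∈ g '' Icc a b := hgHf ▸ hcM
    obtain ⟨z, hz, hgz⟩ := hcim
    have h1 : g a ≤ g z := hgmo haI (hHfI z hz) hz.1
    have h2 : g a ∈ Icc c d := hgHf ▸ ⟨a, haM, rfl⟩
    exact le_antisymm (hgz ▸ h1) h2.1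
  have hgb : g b = d := by
    have hdim : d ∈ g '' Icc a b := hgHf ▸ hdM
    obtain ⟨z, hz, hgz⟩ := hdim
    have h1 : g z ≤ g b := hgmo (hHfI z hz) hbI hz.2
    have h2 : g b ∈ Icc c d := hgHf ▸ ⟨b, hbM, rfl⟩
    exact le_antisymm h2.2 (hgz ▸ h1)
  -- the step lemmas
  have hf1 : ∀ y ∈ unitI, f y ∈ Ioo a b → y ∈ Ioo c d := by
    intro y hy hfy
    constructor
    · by_contra hcon
      have : f y ≤ f c := hfmo hy hcI (le_of_not_gt hcon)
      rw [hfc] at this; exact absurd hfy.1 (not_lt.mpr this)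
    · by_contra hcon
      have : f d ≤ f y := hfmo hdI hy (le_of_not_gt hcon)
      rw [hfd] at this; exact absurd hfy.2 (not_lt.mpr this)
  have hf2 : ∀ y ∈ unitI, f y ∉ Ioo c d := by
    intro y hy hfy
    have : f y ≤ f 1 := hfmo hy h1I hy.2
    linarith [hfy.1]
  have hg1 : ∀ y ∈ unitI, g y ∈ Ioo c d → y ∈ Ioo a b := by
    intro y hy hgy
    constructor
    · by_contra hcon
      have : g y ≤ g a := hgmo hy haI (le_of_not_gt hcon)
      rw [hga] at this; exact absurd hgy.1 (not_lt.mpr this)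
    · by_contra hcon
      have : g b ≤ g y := hgmo hbI hy (le_of_not_gt hcon)
      rw [hgb] at this; exact absurd hgy.2 (not_lt.mpr this)
  have hg2 : ∀ y ∈ unitI, g y ∉ Ioo a b := by
    intro y hy hgy
    have : g 0 ≤ g y := hgmo h0I hy hy.1
    linarith [hgy.2]
  -- the "no entering the holes" lemma
  set U : Set ℝ := Ioo a b ∪ Ioo c d with hU
  have hUopen : IsOpen U := isOpen_Ioo.union isOpen_Ioo
  have hword : ∀ w : List Bool, ∀ y ∈ unitI, word f g w y ∈ unitI := by
    intro w
    induction w with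
    | nil => intro y hy; simpa [word] using hy
    | cons hd tl ih =>
      intro y hy
      cases hd
      · simpa [word] using hA.g_maps (ih y hy)
      · simpa [word] using hA.f_maps (ih y hy)
  have hstepf : ∀ y ∈ unitI, f y ∈ U → y ∈ U := by
    intro y hy h
    rcases h with h | h
    · exact Or.inr (hf1 y hy h)
    · exact absurd h (hf2 y hy)
  have hstepg : ∀ y ∈ unitI, g y ∈ U → y ∈ U := by
    intro y hy h
    rcases h with h | h
    · exact absurd h (hg2 y hy)
    · exact Or.inl (hg1 y hy h)
  have hnoenter : ∀ w : List Bool, ∀ y ∈ unitI, word f g w y ∈ U → y ∈ U := by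
    intro w
    induction w with
    | nil => intro y hy h; simpa [word] using h
    | cons hd tl ih =>
      intro y hy h
      cases hd
      · have h' : g (word f g tl y) ∈ U := by simpa [word] using h
        exact ih y hy (hstepg _ (hword tl y hy) h')
      · have h' : f (word f g tl y) ∈ U := by simpa [word] using h
        exact ih y hy (hstepf _ (hword tl y hy) h')
  -- forward invariance of K
  have hfK : ∀ z ∈ K, f z ∈ K ∧ g z ∈ K := by
    intro z hz
    have h1 : f z ∈ orbitP f g z := ⟨[true], by simp, by simp [word]⟩
    have h2 : g z ∈ orbitP f g z := ⟨[false], by simp, by simp [word]⟩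
    rw [← hmin z hz]
    exact ⟨subset_closure h1, subset_closure h2⟩
  -- K is disjoint from U
  have hdisj : ∀ x ∈ K, x ∉ U := by
    intro x hxK hxU
    have main : ∀ q, q ∈ K → q ∉ U → False := by
      intro q hqK hqU
      have hxcl : x ∈ closure (orbitP f g q) := by rw [hmin q hqK]; exact hxK
      obtain ⟨y, hyU, hyOrb⟩ := mem_closure_iff.mp hxcl U hUopen hxU
      obtain ⟨w, _, hwy⟩ := hyOrb
      exact hqU (hnoenter w q (hKI hqK) (hwy ▸ hyU))
    rcases hxU with hx | hx
    · -- x ∈ Ioo a b, take q = f x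
      refine main (f x) (hfK x hxK).1 ?_
      intro hq
      rcases hq with hq | hq
      · have := hf1 x (hKI hxK) hq
        linarith [hx.2, this.1, hb2, hA.g0_lt_f1, hc1]
      · exact hf2 x (hKI hxK) hq
    · -- x ∈ Ioo c d, take q = g x
      refine main (g x) (hfK x hxK).2 ?_
      intro hq
      rcases hq with hq | hq
      · exact hg2 x (hKI hxK) hq
      · have := hg1 x (hKI hxK) hq
        linarith [hx.1, this.2, hb2, hA.g0_lt_f1, hc1]
  -- interior of the union of holes
  have hIntSub : interior (Icc a b ∪ Icc c d) ⊆ U := by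
    intro x hx
    have hxN : Icc a b ∪ Icc c d ∈ nhds x := mem_interior_iff_mem_nhds.mp hx
    rcases interior_subset hx with hxm | hxm
    · have hnotin : x ∉ Icc c d := by
        intro h
        have h1 := hxm.2
        have h2 := h.1
        linarith [hb2, hA.g0_lt_f1, hc1]
      have hcN : (Icc c d)ᶜ ∈ nhds x := isClosed_Icc.isOpen_compl.mem_nhds hnotin
      have hN : Icc a b ∈ nhds x := by
        refine Filter.mem_of_superset (Filter.inter_mem hxN hcN) ?_
        rintro z ⟨hz1 | hz2, hz3⟩
        · exact hz1
        · exact absurd hz2 hz3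
      have : x ∈ interior (Icc a b) := mem_interior_iff_mem_nhds.mpr hN
      rw [interior_Icc] at this
      exact Or.inl this
    · have hnotin : x ∉ Icc a b := by
        intro h
        have h1 := hxm.1
        have h2 := h.2
        linarith [hb2, hA.g0_lt_f1, hc1]
      have hcN : (Icc a b)ᶜ ∈ nhds x := isClosed_Icc.isOpen_compl.mem_nhds hnotin
      have hN : Icc c d ∈ nhds x := by
        refine Filter.mem_of_superset (Filter.inter_mem hxN hcN) ?_
        rintro z ⟨hz1 | hz2, hz3⟩
        · exact absurd hz1 hz3
        · exact hz2
      have : x ∈ interior (Icc c d) := mem_interior_iff_mem_nhds.mpr hN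
      rw [interior_Icc] at this
      exact Or.inr this
  constructor
  · intro z hz
    exact ⟨hKI hz, fun h => hdisj z hz (hIntSub h)⟩
  · intro heq
    set m := (a + b) / 2 with hm
    have hmIoo : m ∈ Ioo a b := ⟨by linarith, by linarith⟩
    have hmI : m ∈ unitI := hHfI m ⟨hmIoo.1.le, hmIoo.2.le⟩
    have hmK : m ∈ K := heq ▸ hmI
    exact hdisj m hmK (Or.inl hmIoo)

end IFSPaper
end
end

section
/- If (f,g) ∈ 𝒞, i.e. (f,g)∈𝒜 satisfies the single overlapping property (So), the hole property (Ho), the eventual expansion property (Ee) and the castration property (Ca), then the unique minimal set K of ⟨f,g⟩₊ is homeomorphic to the Cantor set (equivalently, K is nonempty, compact, perfect and totally disconnected). -/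
open Set Function MeasureTheory

noncomputable section

namespace IFSPaper

/-! ### Auxiliary development -/

/-- Bundled context for the proof. -/
structure Ctx where
  f : ℝ → ℝ
  g : ℝ → ℝ
  Hf : Set ℝ
  Hg : Set ℝ
  K : Set ℝ
  hA : MemA f g
  hSo : So f g
  hHole : HoleAt f g Hf Hg
  μ : ℝ
  hμ : 1 < μ
  hEeF : ∀ y ∈ Fint f 1 \ Hf, DifferentiableAt ℝ (calF f g) y → μ < deriv (calF f g) y
  hEeG : ∀ y ∈ Gint g 1 \ Hg, DifferentiableAt ℝ (calG f g) y → μ < deriv (calG f g) y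
  hCa : Ca f g Hf Hg
  hKne : K.Nonempty
  hKI : K ⊆ unitI
  hKmin : ∀ x ∈ K, closure (orbitP f g x) = K

namespace Ctx

variable (C : Ctx)

lemma zero_mem_I : (0:ℝ) ∈ unitI := by constructor <;> norm_num
lemma one_mem_I : (1:ℝ) ∈ unitI := by constructor <;> norm_num

def a : ℝ := C.g 0
def b : ℝ := C.f 1
def a2 : ℝ := C.g (C.g 0)
def b2 : ℝ := C.f (C.f 1)


lemma f_cont : Continuous C.f := C.hA.f_c1.continuous
lemma g_cont : Continuous C.g := C.hA.g_c1.continuous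

lemma f0 : C.f 0 = 0 := C.hA.f_zero
lemma g1 : C.g 1 = 1 := C.hA.g_one
lemma a_pos : 0 < C.a := C.hA.g0_pos
lemma a_lt_b : C.a < C.b := C.hA.g0_lt_f1
lemma b_lt_one : C.b < 1 := C.hA.f1_lt_one
lemma b_pos : 0 < C.b := lt_trans C.a_pos C.a_lt_b
lemma a_lt_one : C.a < 1 := lt_trans C.a_lt_b C.b_lt_one
lemma a_mem_I : C.a ∈ unitI := ⟨C.a_pos.le, C.a_lt_one.le⟩
lemma b_mem_I : C.b ∈ unitI := ⟨C.b_pos.le, C.b_lt_one.le⟩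

lemma mono_f : StrictMonoOn C.f unitI := by
  have h0 : C.f 0 ≤ C.f 1 := by
    rw [C.f0]; exact le_trans C.a_pos.le (le_of_lt C.a_lt_b)
  exact ContinuousOn.strictMonoOn_of_injOn_Icc (by norm_num) h0
    C.f_cont.continuousOn C.hA.f_inj

lemma mono_g : StrictMonoOn C.g unitI := by
  have h0 : C.g 0 ≤ C.g 1 := by rw [C.g1]; exact C.a_lt_one.le
  exact ContinuousOn.strictMonoOn_of_injOn_Icc (by norm_num) h0
    C.g_cont.continuousOn C.hA.g_inj

lemma b2_lt_a : C.b2 < C.a := C.hSo.1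
lemma b_lt_a2 : C.b < C.a2 := C.hSo.2
lemma b2_pos : 0 < C.b2 := by
  have := C.mono_f zero_mem_I C.b_mem_I C.b_pos
  rwa [C.f0] at this
lemma b2_lt_b : C.b2 < C.b := by
  have h := C.mono_f C.b_mem_I one_mem_I C.b_lt_one
  simpa [b2, b] using h
lemma a2_lt_one : C.a2 < 1 := by
  have := C.mono_g C.a_mem_I one_mem_I C.a_lt_one
  rwa [C.g1] at this
lemma a_lt_a2 : C.a < C.a2 := lt_trans C.a_lt_b C.b_lt_a2
lemma a2_pos : 0 < C.a2 := lt_trans C.a_pos C.a_lt_a2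
lemma a2_mem_I : C.a2 ∈ unitI := ⟨C.a2_pos.le, C.a2_lt_one.le⟩
lemma b2_mem_I : C.b2 ∈ unitI := ⟨C.b2_pos.le, (lt_trans C.b2_lt_a C.a_lt_one).le⟩


/-! #### Inverses -/

def Finv : ℝ → ℝ := Function.invFunOn C.f unitI
def Ginv : ℝ → ℝ := Function.invFunOn C.g unitI

lemma image_f : C.f '' unitI = Icc 0 C.b := by
  apply Subset.antisymm
  · rintro _ ⟨x, hx, rfl⟩
    exact ⟨by rw [← C.f0]; exact C.mono_f.monotoneOn zero_mem_I hx hx.1,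
      C.mono_f.monotoneOn hx one_mem_I hx.2⟩
  · have h := intermediate_value_Icc (by norm_num : (0:ℝ) ≤ 1) C.f_cont.continuousOn
    rw [C.f0] at h
    exact fun y hy => h hy

lemma image_g : C.g '' unitI = Icc C.a 1 := by
  apply Subset.antisymm
  · rintro _ ⟨x, hx, rfl⟩
    exact ⟨C.mono_g.monotoneOn zero_mem_I hx hx.1,
      by rw [← C.g1]; exact C.mono_g.monotoneOn hx one_mem_I hx.2⟩
  · have h := intermediate_value_Icc (by norm_num : (0:ℝ) ≤ 1) C.g_cont.continuousOn
    rw [C.g1] at h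
    exact fun y hy => h hy

lemma Finv_spec {y : ℝ} (hy : y ∈ Icc 0 C.b) : C.Finv y ∈ unitI ∧ C.f (C.Finv y) = y := by
  have : ∃ x ∈ unitI, C.f x = y := by
    rw [← C.image_f] at hy; obtain ⟨x, hx, hfx⟩ := hy; exact ⟨x, hx, hfx⟩
  exact ⟨Function.invFunOn_mem this, Function.invFunOn_eq this⟩

lemma Ginv_spec {y : ℝ} (hy : y ∈ Icc C.a 1) : C.Ginv y ∈ unitI ∧ C.g (C.Ginv y) = y := by
  have : ∃ x ∈ unitI, C.g x = y := by
    rw [← C.image_g] at hy; obtain ⟨x, hx, hfx⟩ := hy; exact ⟨x, hx, hfx⟩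
  exact ⟨Function.invFunOn_mem this, Function.invFunOn_eq this⟩

lemma Finv_f {x : ℝ} (hx : x ∈ unitI) : C.Finv (C.f x) = x := by
  have hfx : C.f x ∈ Icc 0 C.b := by rw [← C.image_f]; exact ⟨x, hx, rfl⟩
  exact C.hA.f_inj (C.Finv_spec hfx).1 hx (C.Finv_spec hfx).2

lemma Ginv_g {x : ℝ} (hx : x ∈ unitI) : C.Ginv (C.g x) = x := by
  have hfx : C.g x ∈ Icc C.a 1 := by rw [← C.image_g]; exact ⟨x, hx, rfl⟩
  exact C.hA.g_inj (C.Ginv_spec hfx).1 hx (C.Ginv_spec hfx).2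

/-- Uniqueness: if `f x = y` with `x ∈ I`, then `Finv y = x`. -/
lemma Finv_eq_of {x y : ℝ} (hx : x ∈ unitI) (hxy : C.f x = y) : C.Finv y = x := by
  subst hxy; exact C.Finv_f hx

lemma Ginv_eq_of {x y : ℝ} (hx : x ∈ unitI) (hxy : C.g x = y) : C.Ginv y = x := by
  subst hxy; exact C.Ginv_g hx

lemma Finv_lt_Finv {y z : ℝ} (hy : y ∈ Icc 0 C.b) (hz : z ∈ Icc 0 C.b) (h : y < z) :
    C.Finv y < C.Finv z := by
  rcases lt_trichotomy (C.Finv y) (C.Finv z) with h' | h' | h'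
  · exact h'
  · exfalso; rw [← (C.Finv_spec hy).2, ← (C.Finv_spec hz).2, h'] at h; exact lt_irrefl _ h
  · exfalso
    have := C.mono_f (C.Finv_spec hz).1 (C.Finv_spec hy).1 h'
    rw [(C.Finv_spec hy).2, (C.Finv_spec hz).2] at this
    exact lt_asymm h this

lemma Ginv_lt_Ginv {y z : ℝ} (hy : y ∈ Icc C.a 1) (hz : z ∈ Icc C.a 1) (h : y < z) :
    C.Ginv y < C.Ginv z := by
  rcases lt_trichotomy (C.Ginv y) (C.Ginv z) with h' | h' | h'
  · exact h'
  · exfalso; rw [← (C.Ginv_spec hy).2, ← (C.Ginv_spec hz).2, h'] at h; exact lt_irrefl _ h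
  · exfalso
    have := C.mono_g (C.Ginv_spec hz).1 (C.Ginv_spec hy).1 h'
    rw [(C.Ginv_spec hy).2, (C.Ginv_spec hz).2] at this
    exact lt_asymm h this

lemma Finv_le_Finv {y z : ℝ} (hy : y ∈ Icc 0 C.b) (hz : z ∈ Icc 0 C.b) (h : y ≤ z) :
    C.Finv y ≤ C.Finv z := by
  rcases eq_or_lt_of_le h with rfl | h'
  · exact le_refl _
  · exact (C.Finv_lt_Finv hy hz h').le

lemma Ginv_le_Ginv {y z : ℝ} (hy : y ∈ Icc C.a 1) (hz : z ∈ Icc C.a 1) (h : y ≤ z) :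
    C.Ginv y ≤ C.Ginv z := by
  rcases eq_or_lt_of_le h with rfl | h'
  · exact le_refl _
  · exact (C.Ginv_lt_Ginv hy hz h').le


/-! #### Minimal set basics -/

lemma word_mapsTo : ∀ w : List Bool, Set.MapsTo (word C.f C.g w) unitI unitI := by
  intro w
  induction w with
  | nil => exact fun x hx => hx
  | cons bb t ih =>
    intro x hx
    rcases bb with _ | _
    · exact C.hA.g_maps (ih hx)
    · exact C.hA.f_maps (ih hx)

lemma word_injOn : ∀ w : List Bool, Set.InjOn (word C.f C.g w) unitI := by
  intro w
  induction w with
  | nil => exact fun x _ y _ h => h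
  | cons bb t ih =>
    intro x hx y hy h
    rcases bb with _ | _
    · exact ih hx hy (C.hA.g_inj (C.word_mapsTo t hx) (C.word_mapsTo t hy) h)
    · exact ih hx hy (C.hA.f_inj (C.word_mapsTo t hx) (C.word_mapsTo t hy) h)

lemma word_cont : ∀ w : List Bool, Continuous (word C.f C.g w) := by
  intro w
  induction w with
  | nil => exact continuous_id
  | cons bb t ih =>
    rcases bb with _ | _
    · exact C.g_cont.comp ih
    · exact C.f_cont.comp ih

lemma K_closed : IsClosed C.K := by
  obtain ⟨x0, hx0⟩ := C.hKne
  rw [← C.hKmin x0 hx0]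
  exact isClosed_closure

lemma K_compact : IsCompact C.K :=
  IsCompact.of_isClosed_subset isCompact_Icc C.K_closed C.hKI

lemma word_mem_K {x : ℝ} (hx : x ∈ C.K) (w : List Bool) : word C.f C.g w x ∈ C.K := by
  rcases eq_or_ne w [] with rfl | hw
  · exact hx
  · have : word C.f C.g w x ∈ orbitP C.f C.g x := ⟨w, hw, rfl⟩
    have h2 := subset_closure this
    rwa [C.hKmin x hx] at h2

lemma K_f {x : ℝ} (hx : x ∈ C.K) : C.f x ∈ C.K := C.word_mem_K hx [true]
lemma K_g {x : ℝ} (hx : x ∈ C.K) : C.g x ∈ C.K := C.word_mem_K hx [false]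

lemma zero_mem_K : (0:ℝ) ∈ C.K := by
  obtain ⟨m, hm⟩ := C.K_compact.exists_isLeast C.hKne
  have hmI : m ∈ unitI := C.hKI hm.1
  rcases eq_or_lt_of_le hmI.1 with h0 | h0
  · rw [← h0] at hm; exact hm.1
  · exfalso
    rcases eq_or_lt_of_le hmI.2 with h1 | h1
    · -- m = 1 : then f 1 ∈ K and f 1 < 1 = m contradicts least
      have hf1 : C.f m ∈ C.K := C.K_f hm.1
      have := hm.2 hf1
      rw [h1] at this
      exact absurd (lt_of_le_of_lt this C.b_lt_one) (by rw [← h1]; exact lt_irrefl m)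
    · have hfm : C.f m < m := C.hA.f_lt_id m ⟨h0, h1⟩
      exact absurd (hm.2 (C.K_f hm.1)) (not_le_of_gt hfm)

lemma one_mem_K : (1:ℝ) ∈ C.K := by
  obtain ⟨m, hm⟩ := C.K_compact.exists_isGreatest C.hKne
  have hmI : m ∈ unitI := C.hKI hm.1
  rcases eq_or_lt_of_le hmI.2 with h1 | h1
  · rw [h1] at hm; exact hm.1
  · exfalso
    rcases eq_or_lt_of_le hmI.1 with h0 | h0
    · have hg : C.g m ∈ C.K := C.K_g hm.1
      have h2 := hm.2 hg
      rw [← h0] at h2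
      exact absurd (lt_of_lt_of_le C.a_pos h2) (lt_irrefl 0)
    · have hgm : m < C.g m := C.hA.id_lt_g m ⟨h0, h1⟩
      exact absurd (hm.2 (C.K_g hm.1)) (not_le_of_gt hgm)

lemma a_mem_K : C.a ∈ C.K := C.K_g C.zero_mem_K
lemma b_mem_K : C.b ∈ C.K := C.K_f C.one_mem_K

/-- Self-similarity: `K = f(K) ∪ g(K)`. -/
lemma K_selfsim : C.K = C.f '' C.K ∪ C.g '' C.K := by
  apply Subset.antisymm
  · have hcl : IsClosed (C.f '' C.K ∪ C.g '' C.K) :=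
      ((C.K_compact.image C.f_cont).union (C.K_compact.image C.g_cont)).isClosed
    have h0 : (0:ℝ) ∈ C.f '' C.K ∪ C.g '' C.K := Or.inl ⟨0, C.zero_mem_K, C.f0⟩
    have horb : orbitP C.f C.g 0 ⊆ C.f '' C.K ∪ C.g '' C.K := by
      rintro _ ⟨w, hw, rfl⟩
      rcases w with _ | ⟨bb, t⟩
      · exact absurd rfl hw
      · have ht : word C.f C.g t 0 ∈ C.K := C.word_mem_K C.zero_mem_K t
        rcases bb with _ | _
        · exact Or.inr ⟨_, ht, rfl⟩
        · exact Or.inl ⟨_, ht, rfl⟩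
    calc C.K = closure (orbitP C.f C.g 0) := (C.hKmin 0 C.zero_mem_K).symm
      _ ⊆ _ := hcl.closure_subset_iff.mpr horb
  · rintro _ (⟨x, hx, rfl⟩ | ⟨x, hx, rfl⟩)
    · exact C.K_f hx
    · exact C.K_g hx

/-- Backward invariance below `a`. -/
lemma back_f {y : ℝ} (hy : y ∈ C.K) (hya : y < C.a) : C.Finv y ∈ C.K ∧ C.f (C.Finv y) = y := by
  have hyI : y ∈ unitI := C.hKI hy
  have : y ∈ C.f '' C.K := by
    have := C.K_selfsim ▸ hy
    rcases this with h | ⟨x, hx, rfl⟩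
    · exact h
    · exfalso
      have : C.a ≤ C.g x := C.mono_g.monotoneOn zero_mem_I (C.hKI hx) (C.hKI hx).1
      exact absurd hya (not_lt_of_ge this)
  obtain ⟨x, hx, rfl⟩ := this
  rw [C.Finv_f (C.hKI hx)]
  exact ⟨hx, rfl⟩

/-- Backward invariance above `b`. -/
lemma back_g {y : ℝ} (hy : y ∈ C.K) (hyb : C.b < y) : C.Ginv y ∈ C.K ∧ C.g (C.Ginv y) = y := by
  have : y ∈ C.g '' C.K := by
    have := C.K_selfsim ▸ hy
    rcases this with ⟨x, hx, rfl⟩ | h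
    · exfalso
      have : C.f x ≤ C.b := C.mono_f.monotoneOn (C.hKI hx) one_mem_I (C.hKI hx).2
      exact absurd hyb (not_lt_of_ge this)
    · exact h
  obtain ⟨x, hx, rfl⟩ := this
  rw [C.Ginv_g (C.hKI hx)]
  exact ⟨hx, rfl⟩


/-! #### Iterates -/

lemma le_g_self {y : ℝ} (hy : y ∈ unitI) : y ≤ C.g y := by
  rcases eq_or_lt_of_le hy.1 with h0 | h0
  · rw [← h0]; exact C.a_pos.le
  · rcases eq_or_lt_of_le hy.2 with h1 | h1
    · rw [h1, C.g1]
    · exact (C.hA.id_lt_g y ⟨h0, h1⟩).le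

lemma f_le_self {y : ℝ} (hy : y ∈ unitI) : C.f y ≤ y := by
  rcases eq_or_lt_of_le hy.1 with h0 | h0
  · rw [← h0, C.f0]
  · rcases eq_or_lt_of_le hy.2 with h1 | h1
    · rw [h1]; exact C.b_lt_one.le
    · exact (C.hA.f_lt_id y ⟨h0, h1⟩).le

lemma g_iter_mem {x : ℝ} (hx : x ∈ unitI) (n : ℕ) : (C.g)^[n] x ∈ unitI := by
  induction n with
  | zero => exact hx
  | succ n ih => rw [Function.iterate_succ_apply']; exact C.hA.g_maps ih

lemma f_iter_mem {x : ℝ} (hx : x ∈ unitI) (n : ℕ) : (C.f)^[n] x ∈ unitI := by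
  induction n with
  | zero => exact hx
  | succ n ih => rw [Function.iterate_succ_apply']; exact C.hA.f_maps ih

lemma tendsto_g_iter {x : ℝ} (hx : x ∈ unitI) (hx0 : 0 < x) :
    Filter.Tendsto (fun n => (C.g)^[n] x) Filter.atTop (nhds 1) := by
  have hmono : Monotone fun n => (C.g)^[n] x := by
    apply monotone_nat_of_le_succ
    intro n
    rw [Function.iterate_succ_apply']
    exact C.le_g_self (C.g_iter_mem hx n)
  have hbdd : BddAbove (Set.range fun n => (C.g)^[n] x) := ⟨1, by
    rintro _ ⟨n, rfl⟩; exact (C.g_iter_mem hx n).2⟩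
  have htend := tendsto_atTop_ciSup hmono hbdd
  set L := ⨆ n, (C.g)^[n] x with hL
  have hgL : C.g L = L := by
    have h1 : Filter.Tendsto (fun n => (C.g)^[n+1] x) Filter.atTop (nhds L) :=
      htend.comp (Filter.tendsto_add_atTop_nat 1)
    have h2 : Filter.Tendsto (fun n => (C.g)^[n+1] x) Filter.atTop (nhds (C.g L)) := by
      simpa [Function.iterate_succ_apply', Function.comp_def] using (C.g_cont.continuousAt.tendsto.comp htend)
    exact tendsto_nhds_unique h2 h1
  have hLmem : L ∈ unitI := by
    constructor
    · exact le_trans hx0.le (le_ciSup hbdd 0)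
    · exact ciSup_le fun n => (C.g_iter_mem hx n).2
  have hL1 : L = 1 := by
    rcases eq_or_lt_of_le hLmem.2 with h | h
    · exact h
    · exfalso
      have hL0 : 0 < L := lt_of_lt_of_le hx0 (le_ciSup hbdd 0)
      have := C.hA.id_lt_g L ⟨hL0, h⟩
      rw [hgL] at this
      exact lt_irrefl _ this
  rwa [hL1] at htend

lemma tendsto_f_iter {x : ℝ} (hx : x ∈ unitI) (hx1 : x < 1) :
    Filter.Tendsto (fun n => (C.f)^[n] x) Filter.atTop (nhds 0) := by
  have hanti : Antitone fun n => (C.f)^[n] x := by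
    apply antitone_nat_of_succ_le
    intro n
    rw [Function.iterate_succ_apply']
    exact C.f_le_self (C.f_iter_mem hx n)
  have hbdd : BddBelow (Set.range fun n => (C.f)^[n] x) := ⟨0, by
    rintro _ ⟨n, rfl⟩; exact (C.f_iter_mem hx n).1⟩
  have htend := tendsto_atTop_ciInf hanti hbdd
  set L := ⨅ n, (C.f)^[n] x with hL
  have hgL : C.f L = L := by
    have h1 : Filter.Tendsto (fun n => (C.f)^[n+1] x) Filter.atTop (nhds L) :=
      htend.comp (Filter.tendsto_add_atTop_nat 1)
    have h2 : Filter.Tendsto (fun n => (C.f)^[n+1] x) Filter.atTop (nhds (C.f L)) := by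
      simpa [Function.iterate_succ_apply', Function.comp_def] using (C.f_cont.continuousAt.tendsto.comp htend)
    exact tendsto_nhds_unique h2 h1
  have hLmem : L ∈ unitI := by
    constructor
    · exact le_ciInf fun n => (C.f_iter_mem hx n).1
    · exact le_trans (ciInf_le hbdd 0) hx.2
  have hL1 : L = 0 := by
    rcases eq_or_lt_of_le hLmem.1 with h | h
    · exact h.symm
    · exfalso
      have hL1' : L < 1 := lt_of_le_of_lt (ciInf_le hbdd 0) hx1
      have := C.hA.f_lt_id L ⟨h, hL1'⟩
      rw [hgL] at this
      exact lt_irrefl _ this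
  rwa [hL1] at htend

lemma exists_g_iter_gt {x s : ℝ} (hx : x ∈ unitI) (hx0 : 0 < x) (hs : s < 1) :
    ∃ n, s < (C.g)^[n] x := by
  have := (C.tendsto_g_iter hx hx0).eventually_const_lt hs
  exact this.exists

lemma exists_f_iter_lt {x s : ℝ} (hx : x ∈ unitI) (hx1 : x < 1) (hs : 0 < s) :
    ∃ n, (C.f)^[n] x < s := by
  have := (C.tendsto_f_iter hx hx1).eventually_lt_const hs
  exact this.exists


/-! #### Perfectness -/

lemma f_pos {y : ℝ} (hy : y ∈ unitI) (h0 : 0 < y) : 0 < C.f y := by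
  have := C.mono_f zero_mem_I hy h0
  rwa [C.f0] at this

lemma f_iter_pos {y : ℝ} (hy : y ∈ unitI) (h0 : 0 < y) (n : ℕ) : 0 < (C.f)^[n] y := by
  induction n with
  | zero => exact h0
  | succ n ih => rw [Function.iterate_succ_apply']; exact C.f_pos (C.f_iter_mem hy n) ih

lemma f_iter_a_mem_K (n : ℕ) : (C.f)^[n] C.a ∈ C.K := by
  induction n with
  | zero => exact C.a_mem_K
  | succ n ih => rw [Function.iterate_succ_apply']; exact C.K_f ih

lemma accPt_K_of_word {x : ℝ} (hx : ∃ w : List Bool, word C.f C.g w 0 = x) :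
    AccPt x (Filter.principal C.K) := by
  obtain ⟨w, rfl⟩ := hx
  rw [accPt_iff_nhds]
  intro U hU
  have htend : Filter.Tendsto (fun n => word C.f C.g w ((C.f)^[n] C.a)) Filter.atTop
      (nhds (word C.f C.g w 0)) :=
    (C.word_cont w).continuousAt.tendsto.comp (C.tendsto_f_iter C.a_mem_I C.a_lt_one)
  have hev : ∀ᶠ n in Filter.atTop, word C.f C.g w ((C.f)^[n] C.a) ∈ U :=
    htend (hU)
  obtain ⟨n, hn⟩ := hev.exists
  refine ⟨word C.f C.g w ((C.f)^[n] C.a), ⟨hn, C.word_mem_K (C.f_iter_a_mem_K n) w⟩, ?_⟩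
  intro heq
  have hne : (C.f)^[n] C.a ≠ 0 := ne_of_gt (C.f_iter_pos C.a_mem_I C.a_pos n)
  exact hne (C.word_injOn w (C.f_iter_mem C.a_mem_I n) zero_mem_I heq)

lemma perfect_K : Perfect C.K := by
  refine ⟨C.K_closed, ?_⟩
  intro x hx
  by_cases hword : ∃ w : List Bool, word C.f C.g w 0 = x
  · exact C.accPt_K_of_word hword
  · rw [accPt_iff_nhds]
    intro U hU
    have hxcl : x ∈ closure (orbitP C.f C.g 0) := by
      rw [C.hKmin 0 C.zero_mem_K]; exact hx
    rw [mem_closure_iff_nhds] at hxcl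
    obtain ⟨y, hyU, hy⟩ := hxcl U hU
    obtain ⟨w, hw, rfl⟩ := hy
    refine ⟨word C.f C.g w 0, ⟨hyU, C.word_mem_K C.zero_mem_K w⟩, ?_⟩
    intro heq
    exact hword ⟨w, heq⟩


/-! #### Hole structure -/

def c1 : ℝ := C.hHole.1.choose
def d1 : ℝ := C.hHole.1.choose_spec.choose
def c2 : ℝ := C.hHole.2.1.choose
def d2 : ℝ := C.hHole.2.1.choose_spec.choose

lemma c1_lt_d1 : C.c1 < C.d1 := C.hHole.1.choose_spec.choose_spec.1
lemma Hf_eq : C.Hf = Icc C.c1 C.d1 := C.hHole.1.choose_spec.choose_spec.2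
lemma c2_lt_d2 : C.c2 < C.d2 := C.hHole.2.1.choose_spec.choose_spec.1
lemma Hg_eq : C.Hg = Icc C.c2 C.d2 := C.hHole.2.1.choose_spec.choose_spec.2

lemma Fint_eq : Fint C.f 1 = Icc C.b2 C.b := by
  have h2 : (C.f)^[1+1] 1 = C.f (C.f 1) := by
    rw [Function.iterate_succ_apply', Function.iterate_one]
  have h1 : (C.f)^[1] 1 = C.f 1 := Function.iterate_one C.f ▸ rfl
  rw [Fint, h2, h1]
  rfl

lemma Gint_eq : Gint C.g 1 = Icc C.a C.a2 := by
  have h2 : (C.g)^[1+1] 0 = C.g (C.g 0) := by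
    rw [Function.iterate_succ_apply', Function.iterate_one]
  have h1 : (C.g)^[1] 0 = C.g 0 := Function.iterate_one C.g ▸ rfl
  rw [Gint, h2, h1]
  rfl

lemma Hf_pos : C.Hf ⊆ Ioo C.b2 C.a := by
  intro x hx
  have h := C.hHole.2.2.1 hx
  rw [C.Fint_eq] at h
  have hsub : interior (Icc C.b2 C.b \ ovW C.f C.g) ⊆ Ioo C.b2 C.a := by
    have heq : Icc C.b2 C.b \ ovW C.f C.g = Ico C.b2 C.a := by
      ext y
      constructor
      · rintro ⟨⟨hy1, hy2⟩, hy3⟩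
        refine ⟨hy1, ?_⟩
        by_contra hya
        push_neg at hya
        exact hy3 ⟨hya, hy2⟩
      · rintro ⟨hy1, hy2⟩
        exact ⟨⟨hy1, le_trans hy2.le C.a_lt_b.le⟩, fun hc => absurd hy2 (not_lt_of_ge hc.1)⟩
    rw [heq, interior_Ico]
  exact hsub h

lemma Hg_pos : C.Hg ⊆ Ioo C.b C.a2 := by
  intro x hx
  have h := C.hHole.2.2.2.1 hx
  rw [C.Gint_eq] at h
  have hsub : interior (Icc C.a C.a2 \ ovW C.f C.g) ⊆ Ioo C.b C.a2 := by
    have heq : Icc C.a C.a2 \ ovW C.f C.g = Ioc C.b C.a2 := by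
      ext y
      constructor
      · rintro ⟨⟨hy1, hy2⟩, hy3⟩
        refine ⟨?_, hy2⟩
        by_contra hyb
        push_neg at hyb
        exact hy3 ⟨hy1, hyb⟩
      · rintro ⟨hy1, hy2⟩
        exact ⟨⟨le_trans C.a_lt_b.le hy1.le, hy2⟩, fun hc => absurd hy1 (not_lt_of_ge hc.2)⟩
    rw [heq, interior_Ioc]
  exact hsub h

lemma c1_mem : C.c1 ∈ C.Hf := by rw [C.Hf_eq]; exact left_mem_Icc.mpr C.c1_lt_d1.le
lemma d1_mem : C.d1 ∈ C.Hf := by rw [C.Hf_eq]; exact right_mem_Icc.mpr C.c1_lt_d1.le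
lemma c2_mem : C.c2 ∈ C.Hg := by rw [C.Hg_eq]; exact left_mem_Icc.mpr C.c2_lt_d2.le
lemma d2_mem : C.d2 ∈ C.Hg := by rw [C.Hg_eq]; exact right_mem_Icc.mpr C.c2_lt_d2.le

lemma b2_lt_c1 : C.b2 < C.c1 := (C.Hf_pos C.c1_mem).1
lemma d1_lt_a : C.d1 < C.a := (C.Hf_pos C.d1_mem).2
lemma b_lt_c2 : C.b < C.c2 := (C.Hg_pos C.c2_mem).1
lemma d2_lt_a2 : C.d2 < C.a2 := (C.Hg_pos C.d2_mem).2

lemma Hf_sub_I : C.Hf ⊆ unitI := fun x hx => by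
  have h := C.Hf_pos hx
  exact ⟨le_trans C.b2_pos.le h.1.le, le_trans h.2.le C.a_lt_one.le⟩

lemma Hg_sub_I : C.Hg ⊆ unitI := fun x hx => by
  have h := C.Hg_pos hx
  exact ⟨le_trans C.b_pos.le h.1.le, le_trans h.2.le C.a2_lt_one.le⟩

lemma f_c2 : C.f C.c2 = C.c1 := by
  have himg : C.f '' C.Hg = C.Hf := C.hHole.2.2.2.2.2
  apply le_antisymm
  · have : C.c1 ∈ C.f '' C.Hg := himg ▸ C.c1_mem
    obtain ⟨h, hh, hfh⟩ := this
    rw [← hfh]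
    apply C.mono_f.monotoneOn (C.Hg_sub_I C.c2_mem) (C.Hg_sub_I hh)
    rw [C.Hg_eq] at hh; exact hh.1
  · have : C.f C.c2 ∈ C.Hf := himg ▸ ⟨C.c2, C.c2_mem, rfl⟩
    rw [C.Hf_eq] at this; exact this.1

lemma f_d2 : C.f C.d2 = C.d1 := by
  have himg : C.f '' C.Hg = C.Hf := C.hHole.2.2.2.2.2
  apply le_antisymm
  · have : C.f C.d2 ∈ C.Hf := himg ▸ ⟨C.d2, C.d2_mem, rfl⟩
    rw [C.Hf_eq] at this; exact this.2
  · have : C.d1 ∈ C.f '' C.Hg := himg ▸ C.d1_mem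
    obtain ⟨h, hh, hfh⟩ := this
    rw [← hfh]
    apply C.mono_f.monotoneOn (C.Hg_sub_I hh) (C.Hg_sub_I C.d2_mem)
    rw [C.Hg_eq] at hh; exact hh.2

lemma g_c1 : C.g C.c1 = C.c2 := by
  have himg : C.g '' C.Hf = C.Hg := C.hHole.2.2.2.2.1
  apply le_antisymm
  · have : C.c2 ∈ C.g '' C.Hf := himg ▸ C.c2_mem
    obtain ⟨h, hh, hfh⟩ := this
    rw [← hfh]
    apply C.mono_g.monotoneOn (C.Hf_sub_I C.c1_mem) (C.Hf_sub_I hh)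
    rw [C.Hf_eq] at hh; exact hh.1
  · have : C.g C.c1 ∈ C.Hg := himg ▸ ⟨C.c1, C.c1_mem, rfl⟩
    rw [C.Hg_eq] at this; exact this.1

lemma g_d1 : C.g C.d1 = C.d2 := by
  have himg : C.g '' C.Hf = C.Hg := C.hHole.2.2.2.2.1
  apply le_antisymm
  · have : C.g C.d1 ∈ C.Hg := himg ▸ ⟨C.d1, C.d1_mem, rfl⟩
    rw [C.Hg_eq] at this; exact this.2
  · have : C.d2 ∈ C.g '' C.Hf := himg ▸ C.d2_mem
    obtain ⟨h, hh, hfh⟩ := this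
    rw [← hfh]
    apply C.mono_g.monotoneOn (C.Hf_sub_I hh) (C.Hf_sub_I C.d1_mem)
    rw [C.Hf_eq] at hh; exact hh.2

/-- The forward orbit of `0` avoids the interiors of the holes. -/
lemma word_zero_avoid : ∀ w : List Bool,
    word C.f C.g w 0 ∉ Ioo C.c1 C.d1 ∧ word C.f C.g w 0 ∉ Ioo C.c2 C.d2 := by
  intro w
  induction w with
  | nil =>
    have h0 : word C.f C.g [] 0 = (0:ℝ) := rfl
    rw [h0]
    constructor
    · rintro ⟨h1, -⟩
      exact absurd (lt_trans C.b2_lt_c1 h1) (lt_asymm C.b2_pos)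
    · rintro ⟨h1, -⟩
      exact absurd (lt_trans C.b_lt_c2 h1) (lt_asymm C.b_pos)
  | cons bb t ih =>
    have hyI : word C.f C.g t 0 ∈ unitI := C.word_mapsTo t zero_mem_I
    set y := word C.f C.g t 0 with hy
    rcases bb with _ | _
    · -- g step
      have hstep : word C.f C.g (false :: t) 0 = C.g y := rfl
      rw [hstep]
      constructor
      · intro hcon
        have h1 : C.a ≤ C.g y := C.mono_g.monotoneOn zero_mem_I hyI hyI.1
        exact absurd hcon.2 (not_lt_of_gt (lt_of_lt_of_le C.d1_lt_a h1))
      · intro hcon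
        have hmem : C.g y ∈ C.Hg := by rw [C.Hg_eq]; exact ⟨hcon.1.le, hcon.2.le⟩
        have hmem2 : C.g y ∈ C.g '' C.Hf := (C.hHole.2.2.2.2.1) ▸ hmem
        obtain ⟨h, hh, hfh⟩ := hmem2
        have hyh : y = h := C.hA.g_inj hyI (C.Hf_sub_I hh) hfh.symm
        rw [C.Hf_eq] at hh
        rcases eq_or_lt_of_le hh.1 with hc | hc
        · rw [hyh, ← hc, C.g_c1] at hcon
          exact lt_irrefl _ hcon.1
        · rcases eq_or_lt_of_le hh.2 with hd | hd
          · rw [hyh, hd, C.g_d1] at hcon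
            exact lt_irrefl _ hcon.2
          · exact ih.1 (by rw [hyh]; exact ⟨hc, hd⟩)
    · -- f step
      have hstep : word C.f C.g (true :: t) 0 = C.f y := rfl
      rw [hstep]
      constructor
      · intro hcon
        have hmem : C.f y ∈ C.Hf := by rw [C.Hf_eq]; exact ⟨hcon.1.le, hcon.2.le⟩
        have hmem2 : C.f y ∈ C.f '' C.Hg := (C.hHole.2.2.2.2.2) ▸ hmem
        obtain ⟨h, hh, hfh⟩ := hmem2
        have hyh : y = h := C.hA.f_inj hyI (C.Hg_sub_I hh) hfh.symm
        rw [C.Hg_eq] at hh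
        rcases eq_or_lt_of_le hh.1 with hc | hc
        · rw [hyh, ← hc, C.f_c2] at hcon
          exact lt_irrefl _ hcon.1
        · rcases eq_or_lt_of_le hh.2 with hd | hd
          · rw [hyh, hd, C.f_d2] at hcon
            exact lt_irrefl _ hcon.2
          · exact ih.2 (by rw [hyh]; exact ⟨hc, hd⟩)
      · intro hcon
        have h1 : C.f y ≤ C.b := C.mono_f.monotoneOn hyI one_mem_I hyI.2
        exact absurd hcon.1 (not_lt_of_gt (lt_of_le_of_lt h1 C.b_lt_c2))

/-- `K` avoids the interiors of the holes. -/
lemma K_avoid {x : ℝ} (hx : x ∈ C.K) : x ∉ Ioo C.c1 C.d1 ∧ x ∉ Ioo C.c2 C.d2 := by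
  constructor
  · intro hcon
    have hxcl : x ∈ closure (orbitP C.f C.g 0) := by rw [C.hKmin 0 C.zero_mem_K]; exact hx
    rw [mem_closure_iff_nhds] at hxcl
    obtain ⟨y, hyU, ⟨w, -, rfl⟩⟩ := hxcl (Ioo C.c1 C.d1) (isOpen_Ioo.mem_nhds hcon)
    exact (C.word_zero_avoid w).1 hyU
  · intro hcon
    have hxcl : x ∈ closure (orbitP C.f C.g 0) := by rw [C.hKmin 0 C.zero_mem_K]; exact hx
    rw [mem_closure_iff_nhds] at hxcl
    obtain ⟨y, hyU, ⟨w, -, rfl⟩⟩ := hxcl (Ioo C.c2 C.d2) (isOpen_Ioo.mem_nhds hcon)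
    exact (C.word_zero_avoid w).2 hyU

lemma K_Hf {x : ℝ} (hx : x ∈ C.K) (hH : x ∈ C.Hf) : x = C.c1 ∨ x = C.d1 := by
  rw [C.Hf_eq] at hH
  rcases eq_or_lt_of_le hH.1 with h | h
  · exact Or.inl h.symm
  · rcases eq_or_lt_of_le hH.2 with h' | h'
    · exact Or.inr h'
    · exact absurd ⟨h, h'⟩ (C.K_avoid hx).1

lemma K_Hg {x : ℝ} (hx : x ∈ C.K) (hH : x ∈ C.Hg) : x = C.c2 ∨ x = C.d2 := by
  rw [C.Hg_eq] at hH
  rcases eq_or_lt_of_le hH.1 with h | h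
  · exact Or.inl h.symm
  · rcases eq_or_lt_of_le hH.2 with h' | h'
    · exact Or.inr h'
    · exact absurd ⟨h, h'⟩ (C.K_avoid hx).2


/-! #### Iterate monotonicity -/

lemma f_iter_mono {x y : ℝ} (hx : x ∈ unitI) (hy : y ∈ unitI) (h : x ≤ y) (j : ℕ) :
    (C.f)^[j] x ≤ (C.f)^[j] y := by
  induction j with
  | zero => exact h
  | succ j ih =>
    rw [Function.iterate_succ_apply', Function.iterate_succ_apply']
    exact C.mono_f.monotoneOn (C.f_iter_mem hx j) (C.f_iter_mem hy j) ih

lemma g_iter_mono {x y : ℝ} (hx : x ∈ unitI) (hy : y ∈ unitI) (h : x ≤ y) (j : ℕ) :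
    (C.g)^[j] x ≤ (C.g)^[j] y := by
  induction j with
  | zero => exact h
  | succ j ih =>
    rw [Function.iterate_succ_apply', Function.iterate_succ_apply']
    exact C.mono_g.monotoneOn (C.g_iter_mem hx j) (C.g_iter_mem hy j) ih

lemma f_iter_strict {x y : ℝ} (hx : x ∈ unitI) (hy : y ∈ unitI) (h : x < y) (j : ℕ) :
    (C.f)^[j] x < (C.f)^[j] y := by
  induction j with
  | zero => exact h
  | succ j ih =>
    rw [Function.iterate_succ_apply', Function.iterate_succ_apply']
    exact C.mono_f (C.f_iter_mem hx j) (C.f_iter_mem hy j) ih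

lemma g_iter_strict {x y : ℝ} (hx : x ∈ unitI) (hy : y ∈ unitI) (h : x < y) (j : ℕ) :
    (C.g)^[j] x < (C.g)^[j] y := by
  induction j with
  | zero => exact h
  | succ j ih =>
    rw [Function.iterate_succ_apply', Function.iterate_succ_apply']
    exact C.mono_g (C.g_iter_mem hx j) (C.g_iter_mem hy j) ih

lemma g_iter_gt_a2 {t : ℝ} (ht : t ∈ unitI) (hta : C.a < t) {i : ℕ} (hi : 1 ≤ i) :
    C.a2 < (C.g)^[i] t := by
  induction i with
  | zero => omega
  | succ i ih =>
    rcases Nat.eq_or_lt_of_le hi with h1 | h1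
    · have : (C.g)^[1] t = C.g t := Function.iterate_one C.g ▸ rfl
      rw [← h1, this]
      exact C.mono_g C.a_mem_I ht hta
    · have hih := ih (by omega)
      rw [Function.iterate_succ_apply']
      calc C.a2 < (C.g)^[i] t := hih
        _ ≤ C.g ((C.g)^[i] t) := C.le_g_self (C.g_iter_mem ht i)

lemma f_iter_lt_b2 {t : ℝ} (ht : t ∈ unitI) (htb : t < C.b) {i : ℕ} (hi : 1 ≤ i) :
    (C.f)^[i] t < C.b2 := by
  induction i with
  | zero => omega
  | succ i ih =>
    rcases Nat.eq_or_lt_of_le hi with h1 | h1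
    · have : (C.f)^[1] t = C.f t := Function.iterate_one C.f ▸ rfl
      rw [← h1, this]
      exact C.mono_f ht C.b_mem_I htb
    · have hih := ih (by omega)
      rw [Function.iterate_succ_apply']
      calc C.f ((C.f)^[i] t) ≤ (C.f)^[i] t := C.f_le_self (C.f_iter_mem ht i)
        _ < C.b2 := hih

/-! #### Evaluation of `calF`, `calG` -/

lemma calF_eval {t : ℝ} (ht : t ∈ Ioc C.a C.a2) (k : ℕ) :
    calF C.f C.g (C.f ((C.g)^[k] t)) = t := by
  have htI : t ∈ unitI := ⟨le_trans C.a_pos.le ht.1.le, le_trans ht.2 C.a2_lt_one.le⟩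
  have hgk : (C.g)^[k] t ∈ unitI := C.g_iter_mem htI k
  set y := C.f ((C.g)^[k] t) with hy
  have hFinv : Function.invFunOn C.f unitI y = (C.g)^[k] t := C.Finv_f hgk
  have hGj : ∀ j, j ≤ k → (Function.invFunOn C.g unitI)^[j] ((C.g)^[k] t) = (C.g)^[k-j] t := by
    intro j hj
    induction j with
    | zero => simp
    | succ j ih =>
      have hj' : j ≤ k := by omega
      rw [Function.iterate_succ_apply', ih hj']
      have hkj : k - j = (k - (j+1)) + 1 := by omega
      rw [hkj, Function.iterate_succ_apply']
      exact C.Ginv_g (C.g_iter_mem htI (k - (j+1)))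
  have hmemk : k ∈ {n : ℕ | (Function.invFunOn C.g unitI)^[n]
      (Function.invFunOn C.f unitI y) ∈ Gint C.g 1} := by
    rw [Set.mem_setOf_eq, hFinv, hGj k le_rfl, Nat.sub_self, C.Gint_eq]
    exact ⟨ht.1.le, ht.2⟩
  have hnot : ∀ j < k, j ∉ {n : ℕ | (Function.invFunOn C.g unitI)^[n]
      (Function.invFunOn C.f unitI y) ∈ Gint C.g 1} := by
    intro j hj hmem
    rw [Set.mem_setOf_eq, hFinv, hGj j hj.le, C.Gint_eq] at hmem
    have : C.a2 < (C.g)^[k-j] t := C.g_iter_gt_a2 htI ht.1 (by omega)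
    exact absurd hmem.2 (not_le_of_gt this)
  have hsInf : sInf {n : ℕ | (Function.invFunOn C.g unitI)^[n]
      (Function.invFunOn C.f unitI y) ∈ Gint C.g 1} = k := by
    apply le_antisymm (Nat.sInf_le hmemk)
    by_contra hcon
    push_neg at hcon
    exact hnot _ hcon (Nat.sInf_mem ⟨k, hmemk⟩)
  rw [calF, hsInf, hFinv, hGj k le_rfl, Nat.sub_self]
  rfl

lemma calG_eval {t : ℝ} (ht : t ∈ Ico C.b2 C.b) (k : ℕ) :
    calG C.f C.g (C.g ((C.f)^[k] t)) = t := by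
  have htI : t ∈ unitI := ⟨le_trans C.b2_pos.le ht.1, le_trans ht.2.le C.b_lt_one.le⟩
  have hgk : (C.f)^[k] t ∈ unitI := C.f_iter_mem htI k
  set y := C.g ((C.f)^[k] t) with hy
  have hGinv : Function.invFunOn C.g unitI y = (C.f)^[k] t := C.Ginv_g hgk
  have hFj : ∀ j, j ≤ k → (Function.invFunOn C.f unitI)^[j] ((C.f)^[k] t) = (C.f)^[k-j] t := by
    intro j hj
    induction j with
    | zero => simp
    | succ j ih =>
      have hj' : j ≤ k := by omega
      rw [Function.iterate_succ_apply', ih hj']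
      have hkj : k - j = (k - (j+1)) + 1 := by omega
      rw [hkj, Function.iterate_succ_apply']
      exact C.Finv_f (C.f_iter_mem htI (k - (j+1)))
  have hmemk : k ∈ {n : ℕ | (Function.invFunOn C.f unitI)^[n]
      (Function.invFunOn C.g unitI y) ∈ Fint C.f 1} := by
    rw [Set.mem_setOf_eq, hGinv, hFj k le_rfl, Nat.sub_self, C.Fint_eq]
    exact ⟨ht.1, ht.2.le⟩
  have hnot : ∀ j < k, j ∉ {n : ℕ | (Function.invFunOn C.f unitI)^[n]
      (Function.invFunOn C.g unitI y) ∈ Fint C.f 1} := by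
    intro j hj hmem
    rw [Set.mem_setOf_eq, hGinv, hFj j hj.le, C.Fint_eq] at hmem
    have : (C.f)^[k-j] t < C.b2 := C.f_iter_lt_b2 htI ht.2 (by omega)
    exact absurd hmem.1 (not_le_of_gt this)
  have hsInf : sInf {n : ℕ | (Function.invFunOn C.f unitI)^[n]
      (Function.invFunOn C.g unitI y) ∈ Fint C.f 1} = k := by
    apply le_antisymm (Nat.sInf_le hmemk)
    by_contra hcon
    push_neg at hcon
    exact hnot _ hcon (Nat.sInf_mem ⟨k, hmemk⟩)
  rw [calG, hsInf, hGinv, hFj k le_rfl, Nat.sub_self]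
  rfl


/-- Representation of points in the domain of `𝓕`. -/
lemma calF_spec {y : ℝ} (hy1 : C.b2 ≤ y) (hy2 : y < C.b) :
    ∃ (k : ℕ) (t : ℝ), t ∈ Ioc C.a C.a2 ∧ y = C.f ((C.g)^[k] t) ∧ calF C.f C.g y = t := by
  have hyIcc : y ∈ Icc 0 C.b := ⟨le_trans C.b2_pos.le hy1, hy2.le⟩
  set s := C.Finv y with hs
  have hsI : s ∈ unitI := (C.Finv_spec hyIcc).1
  have hfs : C.f s = y := (C.Finv_spec hyIcc).2
  have hsb : C.b ≤ s := by
    have hb2 : C.Finv C.b2 = C.b := C.Finv_eq_of C.b_mem_I rfl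
    have := C.Finv_le_Finv (⟨C.b2_pos.le, C.b2_lt_b.le⟩) hyIcc hy1
    rwa [hb2] at this
  have hs1 : s < 1 := by
    rcases eq_or_lt_of_le hsI.2 with h | h
    · exfalso; rw [h] at hfs; exact absurd hfs.symm (ne_of_lt hy2)
    · exact h
  have hne : {n : ℕ | s ≤ (C.g)^[n] C.a2}.Nonempty := by
    obtain ⟨n, hn⟩ := C.exists_g_iter_gt C.a2_mem_I C.a2_pos hs1
    exact ⟨n, hn.le⟩
  set k := sInf {n : ℕ | s ≤ (C.g)^[n] C.a2} with hk
  have hkmem : s ≤ (C.g)^[k] C.a2 := Nat.sInf_mem hne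
  have hkmin : ∀ j < k, (C.g)^[j] C.a2 < s := by
    intro j hj
    by_contra hcon
    push_neg at hcon
    exact absurd (Nat.sInf_le (show j ∈ {n : ℕ | s ≤ (C.g)^[n] C.a2} from hcon)) (by omega)
  -- build the chain s_j = Ginv^[j] s
  have hchain : ∀ j, j ≤ k → ((C.Ginv)^[j] s ∈ unitI ∧ (C.g)^[j] ((C.Ginv)^[j] s) = s ∧
      C.a < (C.Ginv)^[j] s ∧ (j < k → C.a2 < (C.Ginv)^[j] s)) := by
    intro j hj
    induction j with
    | zero =>
      refine ⟨hsI, rfl, lt_of_lt_of_le C.a_lt_b hsb, ?_⟩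
      intro h0
      have := hkmin 0 h0
      simpa using this
    | succ j ih =>
      obtain ⟨hI, hgj, hgta, hgt2⟩ := ih (by omega)
      have hja2 : C.a2 < (C.Ginv)^[j] s := hgt2 (by omega)
      have hdom : (C.Ginv)^[j] s ∈ Icc C.a 1 := ⟨le_trans C.a_lt_a2.le hja2.le, hI.2⟩
      have hspec := C.Ginv_spec hdom
      have hmem1 : (C.Ginv)^[j+1] s ∈ unitI := by
        rw [Function.iterate_succ_apply']; exact hspec.1
      have heq1 : (C.g)^[j+1] ((C.Ginv)^[j+1] s) = s := by
        rw [Function.iterate_succ_apply, Function.iterate_succ_apply', hspec.2]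
        exact hgj
      have hlt1 : C.a < (C.Ginv)^[j+1] s := by
        rw [Function.iterate_succ_apply']
        by_contra hcon
        push_neg at hcon
        have h2 := C.mono_g.monotoneOn hspec.1 C.a_mem_I hcon
        rw [hspec.2] at h2
        exact absurd hja2 (not_lt_of_ge h2)
      refine ⟨hmem1, heq1, hlt1, ?_⟩
      intro hjk
      by_contra hcon
      push_neg at hcon
      have h2 : (C.g)^[j+1] ((C.Ginv)^[j+1] s) ≤ (C.g)^[j+1] C.a2 :=
        C.g_iter_mono hmem1 C.a2_mem_I hcon (j+1)
      rw [heq1] at h2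
      exact absurd h2 (not_le_of_gt (hkmin (j+1) hjk))
  obtain ⟨htI, hgk, hta, -⟩ := hchain k le_rfl
  have hta2 : (C.Ginv)^[k] s ≤ C.a2 := by
    by_contra hcon
    push_neg at hcon
    have h2 : (C.g)^[k] C.a2 < (C.g)^[k] ((C.Ginv)^[k] s) :=
      C.g_iter_strict C.a2_mem_I htI hcon k
    rw [hgk] at h2
    exact absurd hkmem (not_le_of_gt h2)
  refine ⟨k, (C.Ginv)^[k] s, ⟨hta, hta2⟩, ?_, ?_⟩
  · rw [hgk, hfs]
  · have := C.calF_eval (t := (C.Ginv)^[k] s) ⟨hta, hta2⟩ k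
    rwa [hgk, hfs] at this


/-- Representation of points in the domain of `𝓖`. -/
lemma calG_spec {y : ℝ} (hy1 : C.a < y) (hy2 : y ≤ C.a2) :
    ∃ (k : ℕ) (t : ℝ), t ∈ Ico C.b2 C.b ∧ y = C.g ((C.f)^[k] t) ∧ calG C.f C.g y = t := by
  have hyIcc : y ∈ Icc C.a 1 := ⟨hy1.le, le_trans hy2 C.a2_lt_one.le⟩
  set s := C.Ginv y with hs
  have hsI : s ∈ unitI := (C.Ginv_spec hyIcc).1
  have hfs : C.g s = y := (C.Ginv_spec hyIcc).2
  have hsa : s ≤ C.a := by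
    have ha2 : C.Ginv C.a2 = C.a := C.Ginv_eq_of C.a_mem_I rfl
    have := C.Ginv_le_Ginv hyIcc (⟨C.a_lt_a2.le, C.a2_lt_one.le⟩) hy2
    rwa [ha2] at this
  have hs0 : 0 < s := by
    rcases eq_or_lt_of_le hsI.1 with h | h
    · exfalso; rw [← h] at hfs; exact absurd hfs (ne_of_lt hy1)
    · exact h
  have hne : {n : ℕ | (C.f)^[n] C.b2 ≤ s}.Nonempty := by
    obtain ⟨n, hn⟩ := C.exists_f_iter_lt C.b2_mem_I (lt_trans C.b2_lt_b C.b_lt_one) hs0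
    exact ⟨n, hn.le⟩
  set k := sInf {n : ℕ | (C.f)^[n] C.b2 ≤ s} with hk
  have hkmem : (C.f)^[k] C.b2 ≤ s := Nat.sInf_mem hne
  have hkmin : ∀ j < k, s < (C.f)^[j] C.b2 := by
    intro j hj
    by_contra hcon
    push_neg at hcon
    exact absurd (Nat.sInf_le (show j ∈ {n : ℕ | (C.f)^[n] C.b2 ≤ s} from hcon)) (by omega)
  have hchain : ∀ j, j ≤ k → ((C.Finv)^[j] s ∈ unitI ∧ (C.f)^[j] ((C.Finv)^[j] s) = s ∧
      (C.Finv)^[j] s < C.b ∧ (j < k → (C.Finv)^[j] s < C.b2)) := by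
    intro j hj
    induction j with
    | zero =>
      refine ⟨hsI, rfl, lt_of_le_of_lt hsa C.a_lt_b, ?_⟩
      intro h0
      have := hkmin 0 h0
      simpa using this
    | succ j ih =>
      obtain ⟨hI, hgj, hgta, hgt2⟩ := ih (by omega)
      have hjb2 : (C.Finv)^[j] s < C.b2 := hgt2 (by omega)
      have hdom : (C.Finv)^[j] s ∈ Icc 0 C.b := ⟨hI.1, le_trans hjb2.le C.b2_lt_b.le⟩
      have hspec := C.Finv_spec hdom
      have hmem1 : (C.Finv)^[j+1] s ∈ unitI := by
        rw [Function.iterate_succ_apply']; exact hspec.1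
      have heq1 : (C.f)^[j+1] ((C.Finv)^[j+1] s) = s := by
        rw [Function.iterate_succ_apply, Function.iterate_succ_apply', hspec.2]
        exact hgj
      have hlt1 : (C.Finv)^[j+1] s < C.b := by
        rw [Function.iterate_succ_apply']
        by_contra hcon
        push_neg at hcon
        have h2 := C.mono_f.monotoneOn C.b_mem_I hspec.1 hcon
        rw [hspec.2] at h2
        exact absurd hjb2 (not_lt_of_ge h2)
      refine ⟨hmem1, heq1, hlt1, ?_⟩
      intro hjk
      by_contra hcon
      push_neg at hcon
      have h2 : (C.f)^[j+1] C.b2 ≤ (C.f)^[j+1] ((C.Finv)^[j+1] s) :=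
        C.f_iter_mono C.b2_mem_I hmem1 hcon (j+1)
      rw [heq1] at h2
      exact absurd h2 (not_le_of_gt (hkmin (j+1) hjk))
  obtain ⟨htI, hgk, hta, -⟩ := hchain k le_rfl
  have htb2 : C.b2 ≤ (C.Finv)^[k] s := by
    by_contra hcon
    push_neg at hcon
    have h2 : (C.f)^[k] ((C.Finv)^[k] s) < (C.f)^[k] C.b2 :=
      C.f_iter_strict htI C.b2_mem_I hcon k
    rw [hgk] at h2
    exact absurd hkmem (not_le_of_gt h2)
  refine ⟨k, (C.Finv)^[k] s, ⟨htb2, hta⟩, ?_, ?_⟩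
  · rw [hgk, hfs]
  · have := C.calG_eval (t := (C.Finv)^[k] s) ⟨htb2, hta⟩ k
    rwa [hgk, hfs] at this


/-! #### Forced backward chains -/

lemma g_iter_ge_a2 {t : ℝ} (htI : t ∈ unitI) (hta : C.a ≤ t) {i : ℕ} (hi : 1 ≤ i) :
    C.a2 ≤ (C.g)^[i] t := by
  rcases eq_or_lt_of_le hta with h | h
  · -- t = a
    have h1 : C.a2 ≤ (C.g)^[i] C.a := by
      induction i with
      | zero => omega
      | succ i ih =>
        rcases Nat.eq_or_lt_of_le hi with h1 | h1
        · rw [← h1]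
          have h2 : (C.g)^[1] C.a = C.g C.a := Function.iterate_one C.g ▸ rfl
          rw [h2]
          exact le_of_eq rfl
        · have h2 : (C.g)^[i] C.a ≤ (C.g)^[i+1] C.a := by
            rw [Function.iterate_succ_apply']
            exact C.le_g_self (C.g_iter_mem C.a_mem_I i)
          exact le_trans (ih (by omega)) h2
    rw [← h]; exact h1
  · exact (C.g_iter_gt_a2 htI h hi).le

lemma f_iter_le_b2 {t : ℝ} (htI : t ∈ unitI) (htb : t ≤ C.b) {i : ℕ} (hi : 1 ≤ i) :
    (C.f)^[i] t ≤ C.b2 := by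
  rcases eq_or_lt_of_le htb with h | h
  · have h1 : (C.f)^[i] C.b ≤ C.b2 := by
      induction i with
      | zero => omega
      | succ i ih =>
        rcases Nat.eq_or_lt_of_le hi with h1 | h1
        · rw [← h1]
          have h2 : (C.f)^[1] C.b = C.f C.b := Function.iterate_one C.f ▸ rfl
          rw [h2]
          exact le_of_eq rfl
        · have h2 : (C.f)^[i+1] C.b ≤ (C.f)^[i] C.b := by
            rw [Function.iterate_succ_apply']
            exact C.f_le_self (C.f_iter_mem C.b_mem_I i)
          exact le_trans h2 (ih (by omega))
    rw [h]; exact h1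
  · exact (C.f_iter_lt_b2 htI h hi).le

/-- Forced backward `g`-chain : if `g^[k] t ∈ K` and `t ≥ a`, then `t ∈ K`. -/
lemma chain_g {t : ℝ} (htI : t ∈ unitI) (hta : C.a ≤ t) (k : ℕ)
    (hk : (C.g)^[k] t ∈ C.K) : t ∈ C.K := by
  induction k with
  | zero => exact hk
  | succ k ih =>
    apply ih
    have h1 : (C.g)^[k+1] t = C.g ((C.g)^[k] t) := Function.iterate_succ_apply' C.g k t
    have hgt : C.b < (C.g)^[k+1] t :=
      lt_of_lt_of_le C.b_lt_a2 (C.g_iter_ge_a2 htI hta (by omega))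
    obtain ⟨hmem, heq⟩ := C.back_g hk hgt
    rw [h1] at hmem
    have h2 : C.Ginv (C.g ((C.g)^[k] t)) = (C.g)^[k] t := C.Ginv_g (C.g_iter_mem htI k)
    rw [h2] at hmem
    exact hmem

/-- Forced backward `f`-chain : if `f^[k] t ∈ K` and `t ≤ b`, then `t ∈ K`. -/
lemma chain_f {t : ℝ} (htI : t ∈ unitI) (htb : t ≤ C.b) (k : ℕ)
    (hk : (C.f)^[k] t ∈ C.K) : t ∈ C.K := by
  induction k with
  | zero => exact hk
  | succ k ih =>
    apply ih
    have h1 : (C.f)^[k+1] t = C.f ((C.f)^[k] t) := Function.iterate_succ_apply' C.f k t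
    have hlt : (C.f)^[k+1] t < C.a :=
      lt_of_le_of_lt (C.f_iter_le_b2 htI htb (by omega)) C.b2_lt_a
    obtain ⟨hmem, heq⟩ := C.back_f hk hlt
    rw [h1] at hmem
    have : C.Finv (C.f ((C.f)^[k] t)) = (C.f)^[k] t := C.Finv_f (C.f_iter_mem htI k)
    rw [this] at hmem
    exact hmem

lemma calF_forced {y : ℝ} (hy1 : C.b2 ≤ y) (hy2 : y < C.b) (hF : C.Finv y ∈ C.K) :
    calF C.f C.g y ∈ C.K ∧ calF C.f C.g y ∈ Ioc C.a C.a2 ∧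
      ∃ k, y = C.f ((C.g)^[k] (calF C.f C.g y)) := by
  obtain ⟨k, t, ht, hyrep, hcal⟩ := C.calF_spec hy1 hy2
  have htI : t ∈ unitI := ⟨le_trans C.a_pos.le ht.1.le, le_trans ht.2 C.a2_lt_one.le⟩
  have hgkt : (C.g)^[k] t = C.Finv y := by
    apply C.Finv_eq_of (C.g_iter_mem htI k) hyrep.symm |>.symm
  have htK : t ∈ C.K := C.chain_g htI ht.1.le k (by rw [hgkt]; exact hF)
  rw [hcal]
  exact ⟨htK, ht, ⟨k, hyrep⟩⟩

lemma calG_forced {y : ℝ} (hy1 : C.a < y) (hy2 : y ≤ C.a2) (hG : C.Ginv y ∈ C.K) :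
    calG C.f C.g y ∈ C.K ∧ calG C.f C.g y ∈ Ico C.b2 C.b ∧
      ∃ k, y = C.g ((C.f)^[k] (calG C.f C.g y)) := by
  obtain ⟨k, t, ht, hyrep, hcal⟩ := C.calG_spec hy1 hy2
  have htI : t ∈ unitI := ⟨le_trans C.b2_pos.le ht.1, le_trans ht.2.le C.b_lt_one.le⟩
  have hgkt : (C.f)^[k] t = C.Ginv y := by
    apply C.Ginv_eq_of (C.f_iter_mem htI k) hyrep.symm |>.symm
  have htK : t ∈ C.K := C.chain_f htI ht.2.le k (by rw [hgkt]; exact hG)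
  rw [hcal]
  exact ⟨htK, ht, ⟨k, hyrep⟩⟩

/-! #### Countable exceptional sets -/

def Ef : Set ℝ :=
  (range fun k : ℕ => C.f ((C.g)^[k] C.c2)) ∪ (range fun k : ℕ => C.f ((C.g)^[k] C.d2))

def Eg : Set ℝ :=
  (range fun k : ℕ => C.g ((C.f)^[k] C.c1)) ∪ (range fun k : ℕ => C.g ((C.f)^[k] C.d1))

lemma Ef_countable : C.Ef.Countable := (countable_range _).union (countable_range _)
lemma Eg_countable : C.Eg.Countable := (countable_range _).union (countable_range _)

lemma mem_Ef {y : ℝ} (hyK : y ∈ C.K) (hyRf : y ∈ Rf C.f C.g C.Hg) (hF : C.Finv y ∈ C.K) :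
    y ∈ C.Ef := by
  obtain ⟨⟨hyF, hyne⟩, hcal⟩ := hyRf
  rw [C.Fint_eq] at hyF
  have hy2 : y < C.b := lt_of_le_of_ne hyF.2 (fun h => hyne (by rw [h]; rfl))
  obtain ⟨hK, hIoc, k, hrep⟩ := C.calF_forced hyF.1 hy2 hF
  rcases C.K_Hg hK (by rw [C.Hg_eq] at hcal ⊢; exact hcal) with h | h
  · left; exact ⟨k, by simp only []; rw [← h]; exact hrep.symm⟩
  · right; exact ⟨k, by simp only []; rw [← h]; exact hrep.symm⟩

lemma mem_Eg {y : ℝ} (hyK : y ∈ C.K) (hyRg : y ∈ Rg C.f C.g C.Hf) (hG : C.Ginv y ∈ C.K) :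
    y ∈ C.Eg := by
  obtain ⟨⟨hyG, hyne⟩, hcal⟩ := hyRg
  rw [C.Gint_eq] at hyG
  have hy1 : C.a < y := lt_of_le_of_ne hyG.1 (by
    intro h; exact hyne (by rw [← h]; rfl))
  obtain ⟨hK, hIco, k, hrep⟩ := C.calG_forced hy1 hyG.2 hG
  rcases C.K_Hf hK (by rw [C.Hf_eq] at hcal ⊢; exact hcal) with h | h
  · left; exact ⟨k, by simp only []; rw [← h]; exact hrep.symm⟩
  · right; exact ⟨k, by simp only []; rw [← h]; exact hrep.symm⟩

lemma not_Ioo_subset_countable {u v : ℝ} (huv : u < v) {E : Set ℝ} (hE : E.Countable) :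
    ¬ (Ioo u v ⊆ E) := by
  intro hsub
  have h1 : (volume : Measure ℝ) (Ioo u v) = 0 :=
    measure_mono_null hsub (hE.measure_zero volume)
  rw [Real.volume_Ioo] at h1
  have h2 : (0:ENNReal) < ENNReal.ofReal (v - u) := by
    rw [ENNReal.ofReal_pos]
    linarith
  rw [h1] at h2
  exact lt_irrefl _ h2

lemma exists_nonE {u v : ℝ} (huv : u < v) {E : Set ℝ} (hE : E.Countable) :
    ∃ y ∈ Ioo u v, y ∉ E := by
  by_contra hcon
  push_neg at hcon
  exact Ctx.not_Ioo_subset_countable huv hE hcon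

/-! #### The two kill zones -/

lemma a_mem_intRf : C.a ∈ interior (Rf C.f C.g C.Hg) := by
  have haW : C.a ∈ ovW C.f C.g := ⟨le_refl _, C.a_lt_b.le⟩
  rcases C.hCa haW with h | h
  · exact h
  · exfalso
    have : C.a ∈ Rg C.f C.g C.Hf := interior_subset h
    exact this.1.2 rfl

lemma b_mem_intRg : C.b ∈ interior (Rg C.f C.g C.Hf) := by
  have hbW : C.b ∈ ovW C.f C.g := ⟨C.a_lt_b.le, le_refl _⟩
  rcases C.hCa hbW with h | h
  · exfalso
    have : C.b ∈ Rf C.f C.g C.Hg := interior_subset h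
    exact this.1.2 rfl
  · exact h

/-- Kill: a nondegenerate interval in `K` with right endpoint `a = g 0`. -/
lemma KZf {c : ℝ} (hc : c < C.a) (hsub : Icc c C.a ⊆ C.K) : False := by
  obtain ⟨ε, hε, hball⟩ := Metric.mem_nhds_iff.mp (mem_interior_iff_mem_nhds.mp C.a_mem_intRf)
  set u := max c (C.a - ε) with hu
  have huv : u < C.a := max_lt hc (by linarith)
  have hsubE : Ioo u C.a ⊆ C.Ef := by
    intro y hy
    have hyK : y ∈ C.K := hsub ⟨le_trans (le_max_left _ _) hy.1.le, hy.2.le⟩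
    have hyRf : y ∈ Rf C.f C.g C.Hg := hball (by
      rw [Metric.mem_ball, Real.dist_eq, abs_lt]
      constructor <;> [linarith [lt_of_le_of_lt (le_max_right c (C.a - ε)) hy.1]; linarith [hy.2]])
    exact C.mem_Ef hyK hyRf (C.back_f hyK hy.2).1
  exact Ctx.not_Ioo_subset_countable huv C.Ef_countable hsubE

/-- Kill: a nondegenerate interval in `K` with left endpoint `b = f 1`. -/
lemma KZg {d : ℝ} (hd : C.b < d) (hsub : Icc C.b d ⊆ C.K) : False := by
  obtain ⟨ε, hε, hball⟩ := Metric.mem_nhds_iff.mp (mem_interior_iff_mem_nhds.mp C.b_mem_intRg)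
  set v := min d (C.b + ε) with hv
  have huv : C.b < v := lt_min hd (by linarith)
  have hsubE : Ioo C.b v ⊆ C.Eg := by
    intro y hy
    have hyK : y ∈ C.K := hsub ⟨hy.1.le, le_trans hy.2.le (min_le_left _ _)⟩
    have hyRg : y ∈ Rg C.f C.g C.Hf := hball (by
      rw [Metric.mem_ball, Real.dist_eq, abs_lt]
      constructor <;> [linarith [hy.1]; linarith [lt_of_lt_of_le hy.2 (min_le_right d (C.b + ε))]])
    exact C.mem_Eg hyK hyRg (C.back_g hyK hy.1).1
  exact Ctx.not_Ioo_subset_countable huv C.Eg_countable hsubE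


/-! #### Anchored kills -/

/-- An interval in `K` with right end `a2` is fatal. -/
lemma kill_top {p : ℝ} (hpb : C.b < p) (hpa2 : p < C.a2) (hsub : Icc p C.a2 ⊆ C.K) : False := by
  have hpI : p ∈ Icc C.a 1 := ⟨le_trans C.a_lt_b.le hpb.le, le_trans hpa2.le C.a2_lt_one.le⟩
  have hGp := C.Ginv_spec hpI
  have hGpa : C.Ginv p < C.a := by
    by_contra hcon
    push_neg at hcon
    have := C.mono_g.monotoneOn C.a_mem_I hGp.1 hcon
    rw [hGp.2] at this
    exact absurd hpa2 (not_lt_of_ge this)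
  apply C.KZf hGpa
  intro r hr
  have hrI : r ∈ unitI := ⟨le_trans hGp.1.1 hr.1, le_trans hr.2 C.a_lt_one.le⟩
  have hgr : C.g r ∈ Icc p C.a2 := by
    constructor
    · rw [← hGp.2]; exact C.mono_g.monotoneOn hGp.1 hrI hr.1
    · exact C.mono_g.monotoneOn hrI C.a_mem_I hr.2
  have hgrK : C.g r ∈ C.K := hsub hgr
  have hgrb : C.b < C.g r := lt_of_lt_of_le hpb hgr.1
  obtain ⟨hmem, -⟩ := C.back_g hgrK hgrb
  rwa [C.Ginv_g hrI] at hmem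

/-- An interval in `K` with left end `b2` (below `a`) is fatal. -/
lemma kill_bot {e : ℝ} (hb2e : C.b2 < e) (hea : e < C.a) (hsub : Icc C.b2 e ⊆ C.K) : False := by
  have heI : e ∈ Icc 0 C.b := ⟨le_trans C.b2_pos.le hb2e.le, le_trans hea.le C.a_lt_b.le⟩
  have hFe := C.Finv_spec heI
  have hFeb : C.b < C.Finv e := by
    by_contra hcon
    push_neg at hcon
    have := C.mono_f.monotoneOn hFe.1 C.b_mem_I hcon
    rw [hFe.2] at this
    exact absurd hb2e (not_lt_of_ge this)
  apply C.KZg hFeb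
  intro r hr
  have hrI : r ∈ unitI := ⟨le_trans C.b_pos.le hr.1, le_trans hr.2 hFe.1.2⟩
  have hfr : C.f r ∈ Icc C.b2 e := by
    constructor
    · exact C.mono_f.monotoneOn C.b_mem_I hrI hr.1
    · rw [← hFe.2]; exact C.mono_f.monotoneOn hrI hFe.1 hr.2
  have hfrK : C.f r ∈ C.K := hsub hfr
  have hfra : C.f r < C.a := lt_of_le_of_lt hfr.2 hea
  obtain ⟨hmem, -⟩ := C.back_f hfrK hfra
  rwa [C.Finv_f hrI] at hmem

/-- An interval in `K` (with inverse data) reaching up to a branch threshold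
`T k = f (g^[k] a2)` is fatal. -/
lemma killTF {k : ℕ} {w : ℝ}
    (hlow : C.f ((C.g)^[k] C.a) < w) (hhigh : w < C.f ((C.g)^[k] C.a2))
    (hsub : Icc w (C.f ((C.g)^[k] C.a2)) ⊆ C.K)
    (hF : ∀ y ∈ Icc w (C.f ((C.g)^[k] C.a2)), C.Finv y ∈ C.K) : False := by
  set φ := fun t => C.f ((C.g)^[k] t) with hφ
  have hcont : ContinuousOn φ (Icc C.a C.a2) :=
    (C.f_cont.comp (C.g_cont.iterate k)).continuousOn
  have hIVT := intermediate_value_Icc C.a_lt_a2.le hcont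
  obtain ⟨τ, hτ, hφτ⟩ := hIVT ⟨hlow.le, hhigh.le⟩
  have hτI : τ ∈ unitI := ⟨le_trans C.a_pos.le hτ.1, le_trans hτ.2 C.a2_lt_one.le⟩
  have hτa2 : τ < C.a2 := by
    rcases eq_or_lt_of_le hτ.2 with h | h
    · exfalso
      rw [h] at hφτ
      have hhigh2 : w < φ C.a2 := hhigh
      rw [hφτ] at hhigh2
      exact lt_irrefl _ hhigh2
    · exact h
  have hSK : ∀ t ∈ Icc τ C.a2, t ∈ C.K := by
    intro t ht
    have htI : t ∈ unitI := ⟨le_trans hτI.1 ht.1, le_trans ht.2 C.a2_lt_one.le⟩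
    have hφt : φ t ∈ Icc w (C.f ((C.g)^[k] C.a2)) := by
      constructor
      · rw [← hφτ]
        exact C.mono_f.monotoneOn (C.g_iter_mem hτI k) (C.g_iter_mem htI k)
          (C.g_iter_mono hτI htI ht.1 k)
      · exact C.mono_f.monotoneOn (C.g_iter_mem htI k) (C.g_iter_mem C.a2_mem_I k)
          (C.g_iter_mono htI C.a2_mem_I ht.2 k)
    have hFin : C.Finv (φ t) ∈ C.K := hF _ hφt
    have : C.Finv (φ t) = (C.g)^[k] t := C.Finv_f (C.g_iter_mem htI k)
    rw [this] at hFin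
    exact C.chain_g htI (le_trans hτ.1 ht.1) k hFin
  have hp1 : C.b < max τ ((C.b + C.a2)/2) := lt_max_of_lt_right (by linarith [C.b_lt_a2])
  have hp2 : max τ ((C.b + C.a2)/2) < C.a2 := max_lt hτa2 (by linarith [C.b_lt_a2])
  exact C.kill_top hp1 hp2 (fun t ht => hSK t ⟨le_trans (le_max_left _ _) ht.1, ht.2⟩)

/-- Mirror: an interval in `K` (with inverse data) reaching down to a branch threshold
`S k = g (f^[k] b2)` is fatal. -/
lemma killTG {k : ℕ} {w : ℝ}
    (hlow : C.g ((C.f)^[k] C.b2) < w) (hhigh : w < C.g ((C.f)^[k] C.b))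
    (hsub : Icc (C.g ((C.f)^[k] C.b2)) w ⊆ C.K)
    (hG : ∀ y ∈ Icc (C.g ((C.f)^[k] C.b2)) w, C.Ginv y ∈ C.K) : False := by
  set φ := fun t => C.g ((C.f)^[k] t) with hφ
  have hcont : ContinuousOn φ (Icc C.b2 C.b) :=
    (C.g_cont.comp (C.f_cont.iterate k)).continuousOn
  have hIVT := intermediate_value_Icc C.b2_lt_b.le hcont
  obtain ⟨τ, hτ, hφτ⟩ := hIVT ⟨hlow.le, hhigh.le⟩
  have hτI : τ ∈ unitI := ⟨le_trans C.b2_pos.le hτ.1, le_trans hτ.2 C.b_lt_one.le⟩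
  have hτb2 : C.b2 < τ := by
    rcases eq_or_lt_of_le hτ.1 with h | h
    · exfalso
      rw [← h] at hφτ
      have hlow2 : φ C.b2 < w := hlow
      rw [hφτ] at hlow2
      exact lt_irrefl _ hlow2
    · exact h
  have hSK : ∀ t ∈ Icc C.b2 τ, t ∈ C.K := by
    intro t ht
    have htI : t ∈ unitI := ⟨le_trans C.b2_pos.le ht.1, le_trans ht.2 hτI.2⟩
    have hφt : φ t ∈ Icc (C.g ((C.f)^[k] C.b2)) w := by
      constructor
      · exact C.mono_g.monotoneOn (C.f_iter_mem C.b2_mem_I k) (C.f_iter_mem htI k)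
          (C.f_iter_mono C.b2_mem_I htI ht.1 k)
      · rw [← hφτ]
        exact C.mono_g.monotoneOn (C.f_iter_mem htI k) (C.f_iter_mem hτI k)
          (C.f_iter_mono htI hτI ht.2 k)
    have hGin : C.Ginv (φ t) ∈ C.K := hG _ hφt
    have : C.Ginv (φ t) = (C.f)^[k] t := C.Ginv_g (C.f_iter_mem htI k)
    rw [this] at hGin
    exact C.chain_f htI (le_trans ht.2 hτ.2) k hGin
  have he1 : C.b2 < min τ ((C.b2 + C.a)/2) := lt_min hτb2 (by linarith [C.b2_lt_a])
  have he2 : min τ ((C.b2 + C.a)/2) < C.a := min_lt_of_right_lt (by linarith [C.b2_lt_a])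
  exact C.kill_bot he1 he2 (fun t ht => hSK t ⟨ht.1, le_trans ht.2 (min_le_left _ _)⟩)


/-! #### Smoothness helpers -/

lemma contDiff_g_iter (k : ℕ) : ContDiff ℝ 1 ((C.g)^[k]) := by
  induction k with
  | zero => exact contDiff_id
  | succ k ih =>
    rw [Function.iterate_succ']
    exact C.hA.g_c1.comp ih

lemma contDiff_f_iter (k : ℕ) : ContDiff ℝ 1 ((C.f)^[k]) := by
  induction k with
  | zero => exact contDiff_id
  | succ k ih =>
    rw [Function.iterate_succ']
    exact C.hA.f_c1.comp ih

lemma g_iter_hasDeriv {s : ℝ} (hs : s ∈ unitI) (k : ℕ) :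
    ∃ D : ℝ, D ≠ 0 ∧ HasDerivAt ((C.g)^[k]) D s := by
  induction k with
  | zero => exact ⟨1, one_ne_zero, hasDerivAt_id s⟩
  | succ k ih =>
    obtain ⟨D, hD, hder⟩ := ih
    have hgd : HasDerivAt C.g (deriv C.g ((C.g)^[k] s)) ((C.g)^[k] s) :=
      (C.hA.g_c1.differentiable one_ne_zero).differentiableAt.hasDerivAt
    refine ⟨deriv C.g ((C.g)^[k] s) * D, ?_, ?_⟩
    · exact mul_ne_zero (C.hA.g_deriv_ne _ (C.g_iter_mem hs k)) hD
    · rw [Function.iterate_succ']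
      exact HasDerivAt.comp s hgd hder

lemma f_iter_hasDeriv {s : ℝ} (hs : s ∈ unitI) (k : ℕ) :
    ∃ D : ℝ, D ≠ 0 ∧ HasDerivAt ((C.f)^[k]) D s := by
  induction k with
  | zero => exact ⟨1, one_ne_zero, hasDerivAt_id s⟩
  | succ k ih =>
    obtain ⟨D, hD, hder⟩ := ih
    have hgd : HasDerivAt C.f (deriv C.f ((C.f)^[k] s)) ((C.f)^[k] s) :=
      (C.hA.f_c1.differentiable one_ne_zero).differentiableAt.hasDerivAt
    refine ⟨deriv C.f ((C.f)^[k] s) * D, ?_, ?_⟩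
    · exact mul_ne_zero (C.hA.f_deriv_ne _ (C.f_iter_mem hs k)) hD
    · rw [Function.iterate_succ']
      exact HasDerivAt.comp s hgd hder

lemma Icc_subset_closure_diff {u v : ℝ} (huv : u < v) {E : Set ℝ} (hE : E.Countable) :
    Icc u v ⊆ closure (Ioo u v \ E) := by
  intro x hx
  rw [Metric.mem_closure_iff]
  intro ε hε
  set α := max u (x - ε/2) with hα
  set β := min v (x + ε/2) with hβ
  have hαβ : α < β := by
    apply max_lt <;> apply lt_min
    · exact huv
    · linarith [hx.1]
    · linarith [hx.2]
    · linarith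
  obtain ⟨y, hy, hyE⟩ := Ctx.exists_nonE hαβ hE
  refine ⟨y, ⟨⟨lt_of_le_of_lt (le_max_left _ _) hy.1, lt_of_lt_of_le hy.2 (min_le_left _ _)⟩, hyE⟩, ?_⟩
  rw [Real.dist_eq, abs_lt]
  constructor
  · have := lt_of_lt_of_le hy.2 (min_le_right _ _)
    linarith
  · have := lt_of_le_of_lt (le_max_right u (x - ε/2)) hy.1
    linarith

/-! #### The expansion transitions -/

lemma transF {u v : ℝ} (hu : C.b2 ≤ u) (huv : u < v) (hv : v < C.b)
    (hsub : Icc u v ⊆ C.K) (hF : ∀ y ∈ Icc u v, C.Finv y ∈ C.K)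
    (hNT : ∀ k : ℕ, C.f ((C.g)^[k] C.a2) ∉ Ioo u v) :
    ∃ q1 q2 : ℝ, q1 < q2 ∧ Icc q1 q2 ⊆ C.K ∧ Icc q1 q2 ⊆ Icc C.a C.a2 ∧
      C.μ * (v - u) ≤ q2 - q1 := by
  obtain ⟨k, t2, ht2, hvrep, hcalv⟩ := C.calF_spec (le_trans hu huv.le) hv
  have ht2I : t2 ∈ unitI := ⟨le_trans C.a_pos.le ht2.1.le, le_trans ht2.2 C.a2_lt_one.le⟩
  set φ : ℝ → ℝ := fun t => C.f ((C.g)^[k] t) with hφdef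
  have hφC1 : ContDiff ℝ 1 φ := C.hA.f_c1.comp (C.contDiff_g_iter k)
  have hφmono : ∀ {s t : ℝ}, s ∈ unitI → t ∈ unitI → s ≤ t → φ s ≤ φ t := by
    intro s t hs ht hst
    exact C.mono_f.monotoneOn (C.g_iter_mem hs k) (C.g_iter_mem ht k) (C.g_iter_mono hs ht hst k)
  have hφstrict : ∀ {s t : ℝ}, s ∈ unitI → t ∈ unitI → s < t → φ s < φ t := by
    intro s t hs ht hst
    exact C.mono_f (C.g_iter_mem hs k) (C.g_iter_mem ht k) (C.g_iter_strict hs ht hst k)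
  -- φ a ≤ u
  have hφa : φ C.a ≤ u := by
    rcases Nat.eq_zero_or_pos k with rfl | hk
    · have : φ C.a = C.f C.a := rfl
      rw [this]
      calc C.f C.a ≤ C.b2 := (C.mono_f C.a_mem_I C.b_mem_I C.a_lt_b).le
        _ ≤ u := hu
    · -- φ a = f (g^[k-1] a2) = T (k-1), and T (k-1) < v, so ≤ u by hNT
      obtain ⟨k', rfl⟩ : ∃ k', k = k' + 1 := ⟨k - 1, by omega⟩
      have hga : (C.g)^[k'+1] C.a = (C.g)^[k'] C.a2 := by
        rw [Function.iterate_succ_apply]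
        rfl
      have hφa' : φ C.a = C.f ((C.g)^[k'] C.a2) := by
        show C.f ((C.g)^[k'+1] C.a) = _
        rw [hga]
      have hlt : C.f ((C.g)^[k'] C.a2) < v := by
        rw [hvrep]
        apply C.mono_f (C.g_iter_mem C.a2_mem_I k') (C.g_iter_mem ht2I (k'+1))
        calc (C.g)^[k'] C.a2 = (C.g)^[k'+1] C.a := hga.symm
          _ < (C.g)^[k'+1] t2 := C.g_iter_strict C.a_mem_I ht2I ht2.1 (k'+1)
      have := hNT k'
      rw [hφa']
      by_contra hcon
      push_neg at hcon
      exact this ⟨hcon, hlt⟩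
  have hφa2 : v ≤ φ C.a2 := by
    rw [hvrep]
    exact hφmono ht2I C.a2_mem_I ht2.2
  -- q1 via IVT
  have hcont : ContinuousOn φ (Icc C.a C.a2) := hφC1.continuous.continuousOn
  obtain ⟨q1, hq1mem, hφq1⟩ := intermediate_value_Icc C.a_lt_a2.le hcont
    ⟨hφa, le_trans huv.le hφa2⟩
  have hq1I : q1 ∈ unitI := ⟨le_trans C.a_pos.le hq1mem.1, le_trans hq1mem.2 C.a2_lt_one.le⟩
  have hvt2 : v = φ t2 := hvrep
  have hq1t2 : q1 < t2 := by
    by_contra hcon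
    push_neg at hcon
    have := hφmono ht2I hq1I hcon
    rw [hφq1, ← hvt2] at this
    exact absurd huv (not_lt_of_ge this)
  -- membership
  have hmem : ∀ s ∈ Icc q1 t2, s ∈ C.K := by
    intro s hs
    have hsI : s ∈ unitI := ⟨le_trans hq1I.1 hs.1, le_trans hs.2 ht2I.2⟩
    have hφs : φ s ∈ Icc u v := by
      constructor
      · rw [← hφq1]; exact hφmono hq1I hsI hs.1
      · rw [hvt2]; exact hφmono hsI ht2I hs.2
    have hFs := hF _ hφs
    have hFeq : C.Finv (φ s) = (C.g)^[k] s := C.Finv_f (C.g_iter_mem hsI k)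
    rw [hFeq] at hFs
    exact C.chain_g hsI (le_trans hq1mem.1 hs.1) k hFs
  -- derivative bound on good points
  have hμpos : (0:ℝ) < C.μ := lt_trans one_pos C.hμ
  have hbound : ∀ s ∈ Ioo q1 t2, φ s ≠ C.c1 → φ s ≠ C.d1 → deriv φ s ≤ C.μ⁻¹ := by
    intro s hs hnc hnd
    have hsI : s ∈ unitI := ⟨le_trans hq1I.1 hs.1.le, le_trans hs.2.le ht2I.2⟩
    have hφs : φ s ∈ Icc u v := by
      constructor
      · rw [← hφq1]; exact hφmono hq1I hsI hs.1.le
      · rw [hvt2]; exact hφmono hsI ht2I hs.2.le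
    -- strict derivative of φ at s with nonzero value
    obtain ⟨D, hDne, hDder⟩ := C.g_iter_hasDeriv hsI k
    have hfd : HasDerivAt C.f (deriv C.f ((C.g)^[k] s)) ((C.g)^[k] s) :=
      (C.hA.f_c1.differentiable one_ne_zero).differentiableAt.hasDerivAt
    have hφder : HasDerivAt φ (deriv C.f ((C.g)^[k] s) * D) s := HasDerivAt.comp s hfd hDder
    have hPne : deriv C.f ((C.g)^[k] s) * D ≠ 0 :=
      mul_ne_zero (C.hA.f_deriv_ne _ (C.g_iter_mem hsI k)) hDne
    have hdφ : deriv φ s = deriv C.f ((C.g)^[k] s) * D := hφder.deriv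
    have hdne : deriv φ s ≠ 0 := by rw [hdφ]; exact hPne
    have hstrict : HasStrictDerivAt φ (deriv φ s) s := hφC1.contDiffAt.hasStrictDerivAt one_ne_zero
    have hinv : ∀ᶠ x in nhds s, calF C.f C.g (φ x) = x := by
      filter_upwards [isOpen_Ioo.mem_nhds hs] with x hx
      exact C.calF_eval ⟨lt_of_le_of_lt hq1mem.1 hx.1, le_trans hx.2.le ht2.2⟩ k
    have hcalF : HasStrictDerivAt (calF C.f C.g) (deriv φ s)⁻¹ (φ s) := hstrict.to_local_left_inverse hdne hinv
    have hyK : φ s ∈ C.K := hsub hφs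
    have hyHf : φ s ∉ C.Hf := by
      intro hmem2
      rcases C.K_Hf hyK hmem2 with h | h
      exacts [hnc h, hnd h]
    have hyFint : φ s ∈ Fint C.f 1 \ C.Hf := by
      rw [C.Fint_eq]
      exact ⟨⟨le_trans hu hφs.1, le_trans hφs.2 hv.le⟩, hyHf⟩
    have hEe := C.hEeF _ hyFint (HasStrictDerivAt.hasDerivAt hcalF).differentiableAt
    rw [(HasStrictDerivAt.hasDerivAt hcalF).deriv] at hEe
    have hdpos : 0 < deriv φ s := by
      rcases lt_trichotomy (deriv φ s) 0 with h | h | h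
      · exfalso
        have : (deriv φ s)⁻¹ < 0 := inv_lt_zero.mpr h
        linarith
      · exact absurd h hdne
      · exact h
    have h1 : deriv φ s * C.μ < 1 := by
      have h2 := mul_lt_mul_of_pos_left hEe hdpos
      rwa [mul_inv_cancel₀ hdne] at h2
    have h3 : deriv φ s < 1 / C.μ := (lt_div_iff₀ hμpos).mpr h1
    rw [one_div] at h3
    exact h3.le
  -- extend the bound to all of `Ioo q1 t2` by continuity of the derivative
  have hboundall : ∀ s ∈ Ioo q1 t2, deriv φ s ≤ C.μ⁻¹ := by
    have hIooI : Ioo q1 t2 ⊆ unitI := fun x hx =>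
      ⟨le_trans hq1I.1 hx.1.le, le_trans hx.2.le ht2I.2⟩
    have hφinj : ∀ {x y : ℝ}, x ∈ unitI → y ∈ unitI → φ x = φ y → x = y := by
      intro x y hx hy hxy
      rcases lt_trichotomy x y with h | h | h
      · exact absurd hxy (ne_of_lt (hφstrict hx hy h))
      · exact h
      · exact absurd hxy.symm (ne_of_lt (hφstrict hy hx h))
    set E : Set ℝ := (Ioo q1 t2 ∩ {x | φ x = C.c1}) ∪ (Ioo q1 t2 ∩ {x | φ x = C.d1}) with hE
    have hEc : E.Countable := by
      apply Set.Countable.union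
      · apply Set.Subsingleton.countable
        rintro x ⟨hx, hx2⟩ y ⟨hy, hy2⟩
        exact hφinj (hIooI hx) (hIooI hy) (by rw [Set.mem_setOf_eq] at hx2 hy2; rw [hx2, hy2])
      · apply Set.Subsingleton.countable
        rintro x ⟨hx, hx2⟩ y ⟨hy, hy2⟩
        exact hφinj (hIooI hx) (hIooI hy) (by rw [Set.mem_setOf_eq] at hx2 hy2; rw [hx2, hy2])
    intro s hs
    have hS : IsClosed {x : ℝ | deriv φ x ≤ C.μ⁻¹} :=
      isClosed_le (hφC1.continuous_deriv le_rfl) continuous_const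
    have hsubS : Ioo q1 t2 \ E ⊆ {x : ℝ | deriv φ x ≤ C.μ⁻¹} := by
      rintro x ⟨hx, hxE⟩
      refine hbound x hx ?_ ?_
      · intro h; exact hxE (Or.inl ⟨hx, h⟩)
      · intro h; exact hxE (Or.inr ⟨hx, h⟩)
    have hcls := Ctx.Icc_subset_closure_diff hq1t2 hEc (Ioo_subset_Icc_self hs)
    exact (hS.closure_subset_iff.mpr hsubS) hcls
  -- mean value argument
  have hMVT : MonotoneOn (fun t => C.μ⁻¹ * t - φ t) (Icc q1 t2) := by
    apply monotoneOn_of_deriv_nonneg (convex_Icc _ _)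
    · exact ((continuous_const.mul continuous_id).sub hφC1.continuous).continuousOn
    · intro x hx
      exact (((differentiable_id.const_mul _).sub (hφC1.differentiable one_ne_zero)) x).differentiableWithinAt
    · intro x hx
      rw [interior_Icc] at hx
      have hder : deriv (fun t => C.μ⁻¹ * t - φ t) x = C.μ⁻¹ * 1 - deriv φ x := by
        have h1 : HasDerivAt (fun t => C.μ⁻¹ * t - φ t) (C.μ⁻¹ * 1 - deriv φ x) x :=
          ((hasDerivAt_id x).const_mul _).sub
            ((hφC1.differentiable one_ne_zero) x).hasDerivAt
        exact h1.deriv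
      rw [hder]
      have := hboundall x hx
      rw [mul_one]
      linarith
  have hfinal := hMVT (left_mem_Icc.mpr hq1t2.le) (right_mem_Icc.mpr hq1t2.le) hq1t2.le
  simp only at hfinal
  rw [hφq1] at hfinal
  rw [← hvt2] at hfinal
  refine ⟨q1, t2, hq1t2, fun x hx => hmem x hx,
    fun x hx => ⟨le_trans hq1mem.1 hx.1, le_trans hx.2 ht2.2⟩, ?_⟩
  have hvu : v - u ≤ C.μ⁻¹ * (t2 - q1) := by linarith [hfinal]
  calc C.μ * (v - u) ≤ C.μ * (C.μ⁻¹ * (t2 - q1)) :=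
        mul_le_mul_of_nonneg_left hvu hμpos.le
    _ = t2 - q1 := by field_simp


lemma transG {u v : ℝ} (hu : C.a < u) (huv : u < v) (hv : v ≤ C.a2)
    (hsub : Icc u v ⊆ C.K) (hG : ∀ y ∈ Icc u v, C.Ginv y ∈ C.K)
    (hNT : ∀ k : ℕ, C.g ((C.f)^[k] C.b2) ∉ Ioo u v) :
    ∃ q1 q2 : ℝ, q1 < q2 ∧ Icc q1 q2 ⊆ C.K ∧ Icc q1 q2 ⊆ Icc C.b2 C.b ∧
      C.μ * (v - u) ≤ q2 - q1 := by
  obtain ⟨k, t1, ht1, hurep, hcalu⟩ := C.calG_spec hu (le_trans huv.le hv)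
  have ht1I : t1 ∈ unitI := ⟨le_trans C.b2_pos.le ht1.1, le_trans ht1.2.le C.b_lt_one.le⟩
  set φ : ℝ → ℝ := fun t => C.g ((C.f)^[k] t) with hφdef
  have hφC1 : ContDiff ℝ 1 φ := C.hA.g_c1.comp (C.contDiff_f_iter k)
  have hφmono : ∀ {s t : ℝ}, s ∈ unitI → t ∈ unitI → s ≤ t → φ s ≤ φ t := by
    intro s t hs ht hst
    exact C.mono_g.monotoneOn (C.f_iter_mem hs k) (C.f_iter_mem ht k) (C.f_iter_mono hs ht hst k)
  have hφstrict : ∀ {s t : ℝ}, s ∈ unitI → t ∈ unitI → s < t → φ s < φ t := by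
    intro s t hs ht hst
    exact C.mono_g (C.f_iter_mem hs k) (C.f_iter_mem ht k) (C.f_iter_strict hs ht hst k)
  -- v ≤ φ b
  have hφb : v ≤ φ C.b := by
    rcases Nat.eq_zero_or_pos k with rfl | hk
    · have heq : φ C.b = C.g C.b := rfl
      rw [heq]
      calc v ≤ C.a2 := hv
        _ ≤ C.g C.b := (C.mono_g C.a_mem_I C.b_mem_I C.a_lt_b).le
    · obtain ⟨k', rfl⟩ : ∃ k', k = k' + 1 := ⟨k - 1, by omega⟩
      have hfb : (C.f)^[k'+1] C.b = (C.f)^[k'] C.b2 := by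
        rw [Function.iterate_succ_apply]
        rfl
      have hφb' : φ C.b = C.g ((C.f)^[k'] C.b2) := by
        show C.g ((C.f)^[k'+1] C.b) = _
        rw [hfb]
      have hlt : u < C.g ((C.f)^[k'] C.b2) := by
        rw [hurep]
        apply C.mono_g (C.f_iter_mem ht1I (k'+1)) (C.f_iter_mem C.b2_mem_I k')
        calc (C.f)^[k'+1] t1 < (C.f)^[k'+1] C.b := C.f_iter_strict ht1I C.b_mem_I ht1.2 (k'+1)
          _ = (C.f)^[k'] C.b2 := hfb
      have := hNT k'
      rw [hφb']
      by_contra hcon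
      push_neg at hcon
      exact this ⟨hlt, hcon⟩
  have hφt1 : u = φ t1 := hurep
  have hφb2 : φ C.b2 ≤ u := by
    rw [hφt1]
    exact hφmono C.b2_mem_I ht1I ht1.1
  have hcont : ContinuousOn φ (Icc C.b2 C.b) := hφC1.continuous.continuousOn
  obtain ⟨q2, hq2mem, hφq2⟩ := intermediate_value_Icc C.b2_lt_b.le hcont
    ⟨le_trans hφb2 huv.le, hφb⟩
  have hq2I : q2 ∈ unitI := ⟨le_trans C.b2_pos.le hq2mem.1, le_trans hq2mem.2 C.b_lt_one.le⟩
  have ht1q2 : t1 < q2 := by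
    by_contra hcon
    push_neg at hcon
    have := hφmono hq2I ht1I hcon
    rw [hφq2, ← hφt1] at this
    exact absurd huv (not_lt_of_ge this)
  have hmem : ∀ s ∈ Icc t1 q2, s ∈ C.K := by
    intro s hs
    have hsI : s ∈ unitI := ⟨le_trans ht1I.1 hs.1, le_trans hs.2 hq2I.2⟩
    have hφs : φ s ∈ Icc u v := by
      constructor
      · rw [hφt1]; exact hφmono ht1I hsI hs.1
      · rw [← hφq2]; exact hφmono hsI hq2I hs.2
    have hGs := hG _ hφs
    have hGeq : C.Ginv (φ s) = (C.f)^[k] s := C.Ginv_g (C.f_iter_mem hsI k)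
    rw [hGeq] at hGs
    exact C.chain_f hsI (le_trans hs.2 hq2mem.2) k hGs
  have hμpos : (0:ℝ) < C.μ := lt_trans one_pos C.hμ
  have hbound : ∀ s ∈ Ioo t1 q2, φ s ≠ C.c2 → φ s ≠ C.d2 → deriv φ s ≤ C.μ⁻¹ := by
    intro s hs hnc hnd
    have hsI : s ∈ unitI := ⟨le_trans ht1I.1 hs.1.le, le_trans hs.2.le hq2I.2⟩
    have hφs : φ s ∈ Icc u v := by
      constructor
      · rw [hφt1]; exact hφmono ht1I hsI hs.1.le
      · rw [← hφq2]; exact hφmono hsI hq2I hs.2.le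
    obtain ⟨D, hDne, hDder⟩ := C.f_iter_hasDeriv hsI k
    have hfd : HasDerivAt C.g (deriv C.g ((C.f)^[k] s)) ((C.f)^[k] s) :=
      (C.hA.g_c1.differentiable one_ne_zero).differentiableAt.hasDerivAt
    have hφder : HasDerivAt φ (deriv C.g ((C.f)^[k] s) * D) s := HasDerivAt.comp s hfd hDder
    have hPne : deriv C.g ((C.f)^[k] s) * D ≠ 0 :=
      mul_ne_zero (C.hA.g_deriv_ne _ (C.f_iter_mem hsI k)) hDne
    have hdφ : deriv φ s = deriv C.g ((C.f)^[k] s) * D := hφder.deriv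
    have hdne : deriv φ s ≠ 0 := by rw [hdφ]; exact hPne
    have hstrict : HasStrictDerivAt φ (deriv φ s) s := hφC1.contDiffAt.hasStrictDerivAt one_ne_zero
    have hinv : ∀ᶠ x in nhds s, calG C.f C.g (φ x) = x := by
      filter_upwards [isOpen_Ioo.mem_nhds hs] with x hx
      exact C.calG_eval ⟨le_trans ht1.1 hx.1.le, lt_of_lt_of_le hx.2 hq2mem.2⟩ k
    have hcalG : HasStrictDerivAt (calG C.f C.g) (deriv φ s)⁻¹ (φ s) := hstrict.to_local_left_inverse hdne hinv
    have hyK : φ s ∈ C.K := hsub hφs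
    have hyHg : φ s ∉ C.Hg := by
      intro hmem2
      rcases C.K_Hg hyK hmem2 with h | h
      exacts [hnc h, hnd h]
    have hyGint : φ s ∈ Gint C.g 1 \ C.Hg := by
      rw [C.Gint_eq]
      exact ⟨⟨le_trans hu.le hφs.1, le_trans hφs.2 hv⟩, hyHg⟩
    have hEe := C.hEeG _ hyGint (HasStrictDerivAt.hasDerivAt hcalG).differentiableAt
    rw [(HasStrictDerivAt.hasDerivAt hcalG).deriv] at hEe
    have hdpos : 0 < deriv φ s := by
      rcases lt_trichotomy (deriv φ s) 0 with h | h | h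
      · exfalso
        have : (deriv φ s)⁻¹ < 0 := inv_lt_zero.mpr h
        linarith
      · exact absurd h hdne
      · exact h
    have h1 : deriv φ s * C.μ < 1 := by
      have h2 := mul_lt_mul_of_pos_left hEe hdpos
      rwa [mul_inv_cancel₀ hdne] at h2
    have h3 : deriv φ s < 1 / C.μ := (lt_div_iff₀ hμpos).mpr h1
    rw [one_div] at h3
    exact h3.le
  have hboundall : ∀ s ∈ Ioo t1 q2, deriv φ s ≤ C.μ⁻¹ := by
    have hIooI : Ioo t1 q2 ⊆ unitI := fun x hx =>
      ⟨le_trans ht1I.1 hx.1.le, le_trans hx.2.le hq2I.2⟩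
    have hφinj : ∀ {x y : ℝ}, x ∈ unitI → y ∈ unitI → φ x = φ y → x = y := by
      intro x y hx hy hxy
      rcases lt_trichotomy x y with h | h | h
      · exact absurd hxy (ne_of_lt (hφstrict hx hy h))
      · exact h
      · exact absurd hxy.symm (ne_of_lt (hφstrict hy hx h))
    set E : Set ℝ := (Ioo t1 q2 ∩ {x | φ x = C.c2}) ∪ (Ioo t1 q2 ∩ {x | φ x = C.d2}) with hE
    have hEc : E.Countable := by
      apply Set.Countable.union
      · apply Set.Subsingleton.countable
        rintro x ⟨hx, hx2⟩ y ⟨hy, hy2⟩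
        exact hφinj (hIooI hx) (hIooI hy) (by rw [Set.mem_setOf_eq] at hx2 hy2; rw [hx2, hy2])
      · apply Set.Subsingleton.countable
        rintro x ⟨hx, hx2⟩ y ⟨hy, hy2⟩
        exact hφinj (hIooI hx) (hIooI hy) (by rw [Set.mem_setOf_eq] at hx2 hy2; rw [hx2, hy2])
    intro s hs
    have hS : IsClosed {x : ℝ | deriv φ x ≤ C.μ⁻¹} :=
      isClosed_le (hφC1.continuous_deriv le_rfl) continuous_const
    have hsubS : Ioo t1 q2 \ E ⊆ {x : ℝ | deriv φ x ≤ C.μ⁻¹} := by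
      rintro x ⟨hx, hxE⟩
      refine hbound x hx ?_ ?_
      · intro h; exact hxE (Or.inl ⟨hx, h⟩)
      · intro h; exact hxE (Or.inr ⟨hx, h⟩)
    have hcls := Ctx.Icc_subset_closure_diff ht1q2 hEc (Ioo_subset_Icc_self hs)
    exact (hS.closure_subset_iff.mpr hsubS) hcls
  have hMVT : MonotoneOn (fun t => C.μ⁻¹ * t - φ t) (Icc t1 q2) := by
    apply monotoneOn_of_deriv_nonneg (convex_Icc _ _)
    · exact ((continuous_const.mul continuous_id).sub hφC1.continuous).continuousOn
    · intro x hx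
      exact (((differentiable_id.const_mul _).sub (hφC1.differentiable one_ne_zero)) x).differentiableWithinAt
    · intro x hx
      rw [interior_Icc] at hx
      have hder : deriv (fun t => C.μ⁻¹ * t - φ t) x = C.μ⁻¹ * 1 - deriv φ x := by
        have h1 : HasDerivAt (fun t => C.μ⁻¹ * t - φ t) (C.μ⁻¹ * 1 - deriv φ x) x :=
          ((hasDerivAt_id x).const_mul _).sub
            ((hφC1.differentiable one_ne_zero) x).hasDerivAt
        exact h1.deriv
      rw [hder]
      have := hboundall x hx
      rw [mul_one]
      linarith
  have hfinal := hMVT (left_mem_Icc.mpr ht1q2.le) (right_mem_Icc.mpr ht1q2.le) ht1q2.le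
  simp only at hfinal
  rw [hφq2] at hfinal
  rw [← hφt1] at hfinal
  refine ⟨t1, q2, ht1q2, fun x hx => hmem x hx,
    fun x hx => ⟨le_trans ht1.1 hx.1, le_trans hx.2 hq2mem.2⟩, ?_⟩
  have hvu : v - u ≤ C.μ⁻¹ * (q2 - t1) := by linarith [hfinal]
  calc C.μ * (v - u) ≤ C.μ * (C.μ⁻¹ * (q2 - t1)) :=
        mul_le_mul_of_nonneg_left hvu hμpos.le
    _ = q2 - t1 := by field_simp


/-! #### Threshold existence -/

lemma g_iter_lt_one {x : ℝ} (hx : x ∈ unitI) (hx1 : x < 1) (k : ℕ) : (C.g)^[k] x < 1 := by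
  induction k with
  | zero => exact hx1
  | succ k ih =>
    rw [Function.iterate_succ_apply']
    have := C.mono_g (C.g_iter_mem hx k) one_mem_I ih
    rwa [C.g1] at this

lemma f_iter_pos' {x : ℝ} (hx : x ∈ unitI) (hx0 : 0 < x) (k : ℕ) : 0 < (C.f)^[k] x :=
  C.f_iter_pos hx hx0 k

lemma T_lt_b (k : ℕ) : C.f ((C.g)^[k] C.a2) < C.b := by
  have h := C.g_iter_lt_one C.a2_mem_I C.a2_lt_one k
  exact C.mono_f (C.g_iter_mem C.a2_mem_I k) one_mem_I h

lemma S_gt_a (k : ℕ) : C.a < C.g ((C.f)^[k] C.b2) := by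
  have h := C.f_iter_pos C.b2_mem_I C.b2_pos k
  exact C.mono_g zero_mem_I (C.f_iter_mem C.b2_mem_I k) h

lemma exists_T_gt {u : ℝ} (hu : u < C.b) : ∃ k, u < C.f ((C.g)^[k] C.a2) := by
  have htend : Filter.Tendsto (fun k => C.f ((C.g)^[k] C.a2)) Filter.atTop (nhds C.b) := by
    have h1 := C.tendsto_g_iter C.a2_mem_I C.a2_pos
    have h2 := C.f_cont.continuousAt.tendsto.comp h1
    exact (by simpa [C.g1, Function.comp_def] using h2 : Filter.Tendsto _ Filter.atTop (nhds (C.f 1)))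
  exact (htend.eventually_const_lt hu).exists

lemma exists_S_lt {v : ℝ} (hv : C.a < v) : ∃ k, C.g ((C.f)^[k] C.b2) < v := by
  have htend : Filter.Tendsto (fun k => C.g ((C.f)^[k] C.b2)) Filter.atTop (nhds C.a) := by
    have h1 := C.tendsto_f_iter C.b2_mem_I (lt_trans C.b2_lt_b C.b_lt_one)
    have h2 := C.g_cont.continuousAt.tendsto.comp h1
    exact (by simpa [Function.comp_def] using h2 : Filter.Tendsto _ Filter.atTop (nhds (C.g 0)))
  exact (htend.eventually_lt_const hv).exists

lemma T_strict (k : ℕ) : C.f ((C.g)^[k] C.a) < C.f ((C.g)^[k] C.a2) :=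
  C.mono_f (C.g_iter_mem C.a_mem_I k) (C.g_iter_mem C.a2_mem_I k)
    (C.g_iter_strict C.a_mem_I C.a2_mem_I C.a_lt_a2 k)

lemma S_strict (k : ℕ) : C.g ((C.f)^[k] C.b2) < C.g ((C.f)^[k] C.b) :=
  C.mono_g (C.f_iter_mem C.b2_mem_I k) (C.f_iter_mem C.b_mem_I k)
    (C.f_iter_strict C.b2_mem_I C.b_mem_I C.b2_lt_b k)

/-! #### W-state dichotomy -/

lemma fK_closed : IsClosed (C.f '' C.K) := (C.K_compact.image C.f_cont).isClosed
lemma gK_closed : IsClosed (C.g '' C.K) := (C.K_compact.image C.g_cont).isClosed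

lemma Finv_mem_of_fK {y : ℝ} (hy : y ∈ C.f '' C.K) : C.Finv y ∈ C.K := by
  obtain ⟨x, hx, rfl⟩ := hy
  rwa [C.Finv_f (C.hKI hx)]

lemma Ginv_mem_of_gK {y : ℝ} (hy : y ∈ C.g '' C.K) : C.Ginv y ∈ C.K := by
  obtain ⟨x, hx, rfl⟩ := hy
  rwa [C.Ginv_g (C.hKI hx)]

lemma Wstate {u v : ℝ} (hua : C.a ≤ u) (huv : u < v) (hvb : v ≤ C.b)
    (hsub : Icc u v ⊆ C.K) :
    (∀ y ∈ Icc u v, C.Finv y ∈ C.K) ∨ (∀ y ∈ Icc u v, C.Ginv y ∈ C.K) := by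
  have hcover : Ioo u v ⊆ interior (Rf C.f C.g C.Hg) ∪ interior (Rg C.f C.g C.Hf) := by
    intro y hy
    exact C.hCa ⟨le_trans hua hy.1.le, le_trans hy.2.le hvb⟩
  by_cases hA : (Ioo u v ∩ interior (Rf C.f C.g C.Hg)).Nonempty
  · by_cases hB : (Ioo u v ∩ interior (Rg C.f C.g C.Hf)).Nonempty
    · -- mixed : fatal
      exfalso
      obtain ⟨z, hz⟩ := isPreconnected_Ioo _ _ isOpen_interior isOpen_interior hcover hA hB
      have hzopen : Ioo u v ∩ (interior (Rf C.f C.g C.Hg) ∩ interior (Rg C.f C.g C.Hf)) ∈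
          nhds z := by
        apply IsOpen.mem_nhds
        · exact isOpen_Ioo.inter (isOpen_interior.inter isOpen_interior)
        · exact hz
      obtain ⟨ε, hε, hball⟩ := Metric.mem_nhds_iff.mp hzopen
      have hzz : z - ε/2 < z + ε/2 := by linarith
      have hsubE : Ioo (z - ε/2) (z + ε/2) ⊆ C.Ef ∪ C.Eg := by
        intro y hy
        have hyb : y ∈ Metric.ball z ε := by
          rw [Metric.mem_ball, Real.dist_eq, abs_lt]
          constructor <;> [linarith [hy.1]; linarith [hy.2]]
        obtain ⟨hyIoo, hyRf', hyRg'⟩ := hball hyb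
        have hyK : y ∈ C.K := hsub (Ioo_subset_Icc_self hyIoo)
        have hyfg := C.K_selfsim ▸ hyK
        rcases hyfg with h | h
        · exact Or.inl (C.mem_Ef hyK (interior_subset hyRf') (C.Finv_mem_of_fK h))
        · exact Or.inr (C.mem_Eg hyK (interior_subset hyRg') (C.Ginv_mem_of_gK h))
      exact Ctx.not_Ioo_subset_countable hzz (C.Ef_countable.union C.Eg_countable) hsubE
    · -- pure Rf : all in g''K, G-route
      right
      rw [Set.not_nonempty_iff_eq_empty] at hB
      have hIooA : Ioo u v ⊆ interior (Rf C.f C.g C.Hg) := by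
        intro y hy
        rcases hcover hy with h | h
        · exact h
        · exact absurd (Set.mem_inter hy h) (by rw [hB]; exact fun h => h)
      have hD : Ioo u v \ C.Ef ⊆ C.g '' C.K := by
        rintro y ⟨hy, hyE⟩
        have hyK : y ∈ C.K := hsub (Ioo_subset_Icc_self hy)
        have hyfg := C.K_selfsim ▸ hyK
        rcases hyfg with h | h
        · exfalso
          exact hyE (C.mem_Ef hyK (interior_subset (hIooA hy)) (C.Finv_mem_of_fK h))
        · exact h
      have hIccg : Icc u v ⊆ C.g '' C.K := by
        intro y hy
        have h1 := Ctx.Icc_subset_closure_diff huv C.Ef_countable hy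
        exact C.gK_closed.closure_subset_iff.mpr hD h1
      exact fun y hy => C.Ginv_mem_of_gK (hIccg hy)
  · -- pure Rg : all in f''K, F-route
    left
    rw [Set.not_nonempty_iff_eq_empty] at hA
    have hIooB : Ioo u v ⊆ interior (Rg C.f C.g C.Hf) := by
      intro y hy
      rcases hcover hy with h | h
      · exact absurd (Set.mem_inter hy h) (by rw [hA]; exact fun h => h)
      · exact h
    have hD : Ioo u v \ C.Eg ⊆ C.f '' C.K := by
      rintro y ⟨hy, hyE⟩
      have hyK : y ∈ C.K := hsub (Ioo_subset_Icc_self hy)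
      have hyfg := C.K_selfsim ▸ hyK
      rcases hyfg with h | h
      · exact h
      · exfalso
        exact hyE (C.mem_Eg hyK (interior_subset (hIooB hy)) (C.Ginv_mem_of_gK h))
    have hIccf : Icc u v ⊆ C.f '' C.K := by
      intro y hy
      have h1 := Ctx.Icc_subset_closure_diff huv C.Eg_countable hy
      exact C.fK_closed.closure_subset_iff.mpr hD h1
    exact fun y hy => C.Finv_mem_of_fK (hIccf hy)


/-! #### The main expansion loop -/

lemma routeF {n : ℕ} {u v : ℝ}
    (ih : ∀ u v : ℝ, u < v → Icc u v ⊆ C.K → C.b2 ≤ u → v ≤ C.a2 →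
      1 < C.μ^n * (v - u) → False)
    (hu : C.b2 ≤ u) (huv : u < v) (hvb : v ≤ C.b) (hsub : Icc u v ⊆ C.K)
    (hF : ∀ y ∈ Icc u v, C.Finv y ∈ C.K)
    (hgrow : 1 < C.μ^(n+1) * (v - u)) : False := by
  have hμpos : (0:ℝ) < C.μ := lt_trans one_pos C.hμ
  by_cases hNT : ∀ k : ℕ, C.f ((C.g)^[k] C.a2) ∉ Ioo u v
  · have hvb2 : v < C.b := by
      rcases eq_or_lt_of_le hvb with rfl | h
      · exfalso
        obtain ⟨k, hk⟩ := C.exists_T_gt huv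
        exact hNT k ⟨hk, C.T_lt_b k⟩
      · exact h
    obtain ⟨q1, q2, h12, hK2, hsub2, hexp⟩ := C.transF hu huv hvb2 hsub hF hNT
    have hq1 : q1 ∈ Icc C.a C.a2 := hsub2 (left_mem_Icc.mpr h12.le)
    have hq2 : q2 ∈ Icc C.a C.a2 := hsub2 (right_mem_Icc.mpr h12.le)
    apply ih q1 q2 h12 hK2 (le_trans C.b2_lt_a.le hq1.1) hq2.2
    have h1 : C.μ^n * (C.μ * (v-u)) ≤ C.μ^n * (q2-q1) :=
      mul_le_mul_of_nonneg_left hexp (pow_nonneg hμpos.le n)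
    have h2 : C.μ^(n+1) * (v-u) = C.μ^n * (C.μ * (v-u)) := by rw [pow_succ]; ring
    linarith
  · push_neg at hNT
    obtain ⟨k, hTk⟩ := hNT
    set T := C.f ((C.g)^[k] C.a2) with hT
    set L := C.f ((C.g)^[k] C.a) with hL
    have hLT : L < T := C.T_strict k
    set w := max ((u+T)/2) ((L+T)/2) with hw
    have hwT : w < T := max_lt (by rw [hT]; linarith [hTk.1]) (by linarith)
    have hLw : L < w := lt_of_lt_of_le (by linarith) (le_max_right _ _)
    have huw : u < w := lt_of_lt_of_le (by linarith [hTk.1]) (le_max_left _ _)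
    have hsub2 : Icc w T ⊆ Icc u v :=
      fun x hx => ⟨le_trans huw.le hx.1, le_trans hx.2 hTk.2.le⟩
    exact C.killTF hLw hwT (fun x hx => hsub (hsub2 hx)) (fun y hy => hF y (hsub2 hy))

lemma routeG {n : ℕ} {u v : ℝ}
    (ih : ∀ u v : ℝ, u < v → Icc u v ⊆ C.K → C.b2 ≤ u → v ≤ C.a2 →
      1 < C.μ^n * (v - u) → False)
    (hua : C.a ≤ u) (huv : u < v) (hv : v ≤ C.a2) (hsub : Icc u v ⊆ C.K)
    (hG : ∀ y ∈ Icc u v, C.Ginv y ∈ C.K)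
    (hgrow : 1 < C.μ^(n+1) * (v - u)) : False := by
  have hμpos : (0:ℝ) < C.μ := lt_trans one_pos C.hμ
  by_cases hNT : ∀ k : ℕ, C.g ((C.f)^[k] C.b2) ∉ Ioo u v
  · have hua2 : C.a < u := by
      rcases eq_or_lt_of_le hua with rfl | h
      · exfalso
        obtain ⟨k, hk⟩ := C.exists_S_lt huv
        exact hNT k ⟨C.S_gt_a k, hk⟩
      · exact h
    obtain ⟨q1, q2, h12, hK2, hsub2, hexp⟩ := C.transG hua2 huv hv hsub hG hNT
    have hq1 : q1 ∈ Icc C.b2 C.b := hsub2 (left_mem_Icc.mpr h12.le)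
    have hq2 : q2 ∈ Icc C.b2 C.b := hsub2 (right_mem_Icc.mpr h12.le)
    apply ih q1 q2 h12 hK2 hq1.1 (le_trans hq2.2 C.b_lt_a2.le)
    have h1 : C.μ^n * (C.μ * (v-u)) ≤ C.μ^n * (q2-q1) :=
      mul_le_mul_of_nonneg_left hexp (pow_nonneg hμpos.le n)
    have h2 : C.μ^(n+1) * (v-u) = C.μ^n * (C.μ * (v-u)) := by rw [pow_succ]; ring
    linarith
  · push_neg at hNT
    obtain ⟨k, hTk⟩ := hNT
    set S := C.g ((C.f)^[k] C.b2) with hS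
    set U := C.g ((C.f)^[k] C.b) with hU
    have hSU : S < U := C.S_strict k
    set w := min ((S+v)/2) ((S+U)/2) with hw
    have hSw : S < w := lt_min (by rw [hS]; linarith [hTk.2]) (by linarith)
    have hwU : w < U := lt_of_le_of_lt (min_le_right _ _) (by linarith)
    have hwv : w < v := lt_of_le_of_lt (min_le_left _ _) (by linarith [hTk.2])
    have hsub2 : Icc S w ⊆ Icc u v :=
      fun x hx => ⟨le_trans hTk.1.le hx.1, le_trans hx.2 hwv.le⟩
    exact C.killTG hSw hwU (fun x hx => hsub (hsub2 hx)) (fun y hy => hG y (hsub2 hy))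

lemma mainQ : ∀ n : ℕ, ∀ u v : ℝ, u < v → Icc u v ⊆ C.K → C.b2 ≤ u → v ≤ C.a2 →
    1 < C.μ^n * (v - u) → False := by
  intro n
  induction n with
  | zero =>
    intro u v huv hsub hu hv hgrow
    rw [pow_zero, one_mul] at hgrow
    have h1 : v ≤ 1 := le_trans hv C.a2_lt_one.le
    have h2 : 0 ≤ u := le_trans C.b2_pos.le hu
    linarith
  | succ n ih =>
    intro u v huv hsub hu hv hgrow
    rcases le_or_gt v C.a with hva | hva
    · rcases eq_or_lt_of_le hva with rfl | hva2
      · exact C.KZf huv hsub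
      · exact C.routeF ih hu huv (le_trans hva2.le C.a_lt_b.le) hsub
          (fun y hy => (C.back_f (hsub hy) (lt_of_le_of_lt hy.2 hva2)).1) hgrow
    · rcases le_or_gt C.b u with hub | hub
      · rcases eq_or_lt_of_le hub with rfl | hub2
        · exact C.KZg huv hsub
        · exact C.routeG ih (le_trans C.a_lt_b.le hub2.le) huv hv hsub
            (fun y hy => (C.back_g (hsub hy) (lt_of_lt_of_le hub2 hy.1)).1) hgrow
      · rcases lt_or_ge u C.a with hua | hua
        · -- straddles a
          exact C.KZf hua (fun x hx => hsub ⟨hx.1, le_trans hx.2 hva.le⟩)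
        · rcases lt_or_ge C.b v with hvb | hvb
          · -- straddles b
            exact C.KZg hvb (fun x hx => hsub ⟨le_trans hub.le hx.1, hx.2⟩)
          · rcases C.Wstate hua huv hvb hsub with hF | hG
            · exact C.routeF ih (le_trans C.b2_lt_a.le hua) huv hvb hsub hF hgrow
            · exact C.routeG ih hua huv (le_trans hvb C.b_lt_a2.le) hsub hG hgrow

/-- No nondegenerate interval inside `K ∩ [b2, a2]`. -/
lemma no_interval_core {u v : ℝ} (huv : u < v) (hsub : Icc u v ⊆ C.K)
    (hu : C.b2 ≤ u) (hv : v ≤ C.a2) : False := by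
  have hμ := C.hμ
  obtain ⟨n, hn⟩ := pow_unbounded_of_one_lt ((v - u)⁻¹) hμ
  apply C.mainQ n u v huv hsub hu hv
  have hvu : 0 < v - u := sub_pos.mpr huv
  have h1 : (v-u)⁻¹ * (v - u) < C.μ^n * (v - u) :=
    mul_lt_mul_of_pos_right hn hvu
  rwa [inv_mul_cancel₀ (ne_of_gt hvu)] at h1


/-! #### Descent from the top region -/

lemma K_g_iter {x : ℝ} (hx : x ∈ C.K) (m : ℕ) : (C.g)^[m] x ∈ C.K := by
  induction m with
  | zero => exact hx
  | succ m ih => rw [Function.iterate_succ_apply']; exact C.K_g ih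

lemma high : ∀ j : ℕ, ∀ {P Q : ℝ}, C.b < P → P < Q → Q < 1 → Icc P Q ⊆ C.K →
    Q ≤ (C.g)^[j] C.a2 → False := by
  intro j
  induction j with
  | zero =>
    intro P Q hbP hPQ hQ1 hsub hQa2
    exact C.no_interval_core hPQ hsub (le_trans C.b2_lt_b.le hbP.le) hQa2
  | succ j ih =>
    intro P Q hbP hPQ hQ1 hsub hQa2
    by_cases hQ : Q ≤ C.a2
    · exact C.no_interval_core hPQ hsub (le_trans C.b2_lt_b.le hbP.le) hQ
    · push_neg at hQ
      have hQI : Q ∈ Icc C.a 1 := ⟨le_trans C.a_lt_b.le (lt_trans hbP hPQ).le, hQ1.le⟩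
      have hQspec := C.Ginv_spec hQI
      have hGQ1 : C.Ginv Q < 1 := by
        by_contra hcon
        push_neg at hcon
        have h2 := C.mono_g.monotoneOn one_mem_I hQspec.1 hcon
        rw [hQspec.2, C.g1] at h2
        exact absurd hQ1 (not_lt_of_ge h2)
      have hGQj : C.Ginv Q ≤ (C.g)^[j] C.a2 := by
        by_contra hcon
        push_neg at hcon
        have hjI : (C.g)^[j] C.a2 ∈ unitI := C.g_iter_mem C.a2_mem_I j
        have h2 := C.mono_g hjI hQspec.1 hcon
        rw [hQspec.2] at h2
        rw [← Function.iterate_succ_apply' C.g j C.a2] at h2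
        exact absurd hQa2 (not_le_of_gt h2)
      rcases lt_trichotomy C.a2 P with hP | hP | hP
      · -- pull the whole interval down
        have hPI : P ∈ Icc C.a 1 := ⟨le_trans C.a_lt_b.le hbP.le, (lt_trans hPQ hQ1).le⟩
        have hPspec := C.Ginv_spec hPI
        have hPQ' : C.Ginv P < C.Ginv Q := C.Ginv_lt_Ginv hPI hQI hPQ
        have hPa : C.a < C.Ginv P := by
          by_contra hcon
          push_neg at hcon
          have h2 := C.mono_g.monotoneOn hPspec.1 C.a_mem_I hcon
          rw [hPspec.2] at h2
          exact absurd hP (not_lt_of_ge h2)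
        have hsub2 : Icc (C.Ginv P) (C.Ginv Q) ⊆ C.K := by
          intro r hr
          have hrI : r ∈ unitI := ⟨le_trans hPspec.1.1 hr.1, le_trans hr.2 hQspec.1.2⟩
          have hgr : C.g r ∈ Icc P Q := by
            constructor
            · rw [← hPspec.2]; exact C.mono_g.monotoneOn hPspec.1 hrI hr.1
            · rw [← hQspec.2]; exact C.mono_g.monotoneOn hrI hQspec.1 hr.2
          have hgrK := hsub hgr
          have hgrb : C.b < C.g r := lt_of_lt_of_le hbP hgr.1
          obtain ⟨hmem, -⟩ := C.back_g hgrK hgrb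
          rwa [C.Ginv_g hrI] at hmem
        rcases lt_trichotomy C.b (C.Ginv P) with hb | hb | hb
        · exact ih hb hPQ' hGQ1 hsub2 hGQj
        · exact C.KZg (by rw [hb]; exact hPQ') (by rw [hb]; exact hsub2)
        · rcases le_or_gt (C.Ginv Q) C.b with hQb | hQb
          · exact C.no_interval_core hPQ' hsub2 (le_trans C.b2_lt_a.le hPa.le)
              (le_trans hQb C.b_lt_a2.le)
          · exact C.KZg hQb (fun x hx => hsub2 ⟨le_trans hb.le hx.1, hx.2⟩)
      · -- P = a2 : one pull gives an interval with left end a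
        have hsub2 : Icc C.a (C.Ginv Q) ⊆ C.K := by
          intro r hr
          have hrI : r ∈ unitI := ⟨le_trans C.a_pos.le hr.1, le_trans hr.2 hQspec.1.2⟩
          have hgr : C.g r ∈ Icc P Q := by
            constructor
            · rw [← hP]; exact C.mono_g.monotoneOn C.a_mem_I hrI hr.1
            · rw [← hQspec.2]; exact C.mono_g.monotoneOn hrI hQspec.1 hr.2
          have hgrK := hsub hgr
          have hgrb : C.b < C.g r := lt_of_lt_of_le hbP hgr.1
          obtain ⟨hmem, -⟩ := C.back_g hgrK hgrb
          rwa [C.Ginv_g hrI] at hmem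
        have haGQ : C.a < C.Ginv Q := by
          by_contra hcon
          push_neg at hcon
          have h2 := C.mono_g.monotoneOn hQspec.1 C.a_mem_I hcon
          rw [hQspec.2] at h2
          exact absurd hQ (not_lt_of_ge h2)
        rcases le_or_gt (C.Ginv Q) C.a2 with hc | hc
        · exact C.no_interval_core haGQ hsub2 C.b2_lt_a.le hc
        · -- a2 strictly inside : kill_top
          apply C.kill_top (p := max C.a ((C.b + C.a2)/2))
            (lt_max_of_lt_right (by linarith [C.b_lt_a2]))
            (max_lt C.a_lt_a2 (by linarith [C.b_lt_a2]))
          intro x hx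
          exact hsub2 ⟨le_trans (le_max_left _ _) hx.1, le_trans hx.2 hc.le⟩
      · -- a2 ∈ (P, Q) : kill_top directly
        apply C.kill_top (p := max P ((C.b + C.a2)/2))
          (lt_max_of_lt_right (by linarith [C.b_lt_a2]))
          (max_lt hP (by linarith [C.b_lt_a2]))
        intro x hx
        exact hsub ⟨le_trans (le_max_left _ _) hx.1, le_trans hx.2 hQ.le⟩

/-- No nondegenerate interval inside `K` at all. -/
lemma no_interval {x y : ℝ} (hxy : x < y) (hsub : Icc x y ⊆ C.K) : False := by
  have hx0 : 0 ≤ x := (C.hKI (hsub (left_mem_Icc.mpr hxy.le))).1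
  have hy1 : y ≤ 1 := (C.hKI (hsub (right_mem_Icc.mpr hxy.le))).2
  set p := (2*x + y)/3 with hp
  set q := (x + 2*y)/3 with hq
  have hpq : p < q := by rw [hp, hq]; linarith
  have hp0 : 0 < p := by rw [hp]; linarith
  have hq1 : q < 1 := by rw [hq]; linarith
  have hpI : p ∈ unitI := ⟨hp0.le, by rw [hp]; linarith⟩
  have hqI : q ∈ unitI := ⟨by rw [hq]; linarith, hq1.le⟩
  obtain ⟨M, hM⟩ := C.exists_g_iter_gt hpI hp0 C.b_lt_one
  set P := (C.g)^[M] p with hP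
  set Q := (C.g)^[M] q with hQ
  have hPQ : P < Q := C.g_iter_strict hpI hqI hpq M
  have hQ1 : Q < 1 := C.g_iter_lt_one hqI hq1 M
  have hsubK : Icc P Q ⊆ C.K := by
    intro r hr
    have hIVT := intermediate_value_Icc hpq.le ((C.g_cont.iterate M).continuousOn)
    obtain ⟨s, hs, rfl⟩ := hIVT hr
    apply C.K_g_iter
    apply hsub
    constructor
    · calc x ≤ p := by rw [hp]; linarith
        _ ≤ s := hs.1
    · calc s ≤ q := hs.2
        _ ≤ y := by rw [hq]; linarith
  obtain ⟨jj, hjj⟩ := C.exists_g_iter_gt C.a2_mem_I C.a2_pos hQ1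
  exact C.high jj hM hPQ hQ1 hsubK hjj.le

/-- `K` is totally disconnected. -/
lemma totdis : IsTotallyDisconnected C.K := by
  intro t hts htpre
  intro x hx y hy
  by_contra hxy
  rcases lt_trichotomy x y with h | h | h
  · have hIcc : Icc x y ⊆ t := htpre.ordConnected.out hx hy
    exact C.no_interval h (fun z hz => hts (hIcc hz))
  · exact hxy h
  · have hIcc : Icc y x ⊆ t := htpre.ordConnected.out hy hx
    exact C.no_interval h (fun z hz => hts (hIcc hz))

end Ctx

/-- if `(f,g) ∈ 𝒞`, then the unique minimal set `K` is homeomorphic to the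
Cantor set, i.e. `K` is nonempty, compact, perfect and totally disconnected. -/
theorem minimal_set_is_cantor (f g : ℝ → ℝ) (Hf Hg K : Set ℝ)
    (hC : MemC f g Hf Hg) (hK : IsMinimalSet f g K) :
    K.Nonempty ∧ IsCompact K ∧ Perfect K ∧ IsTotallyDisconnected K := by
  obtain ⟨hA, hSo, hHole, hEe, hCa⟩ := hC
  obtain ⟨μ, hμ, hEeF, hEeG⟩ := hEe
  obtain ⟨hKne, hKI, hKmin⟩ := hK
  let C : Ctx := ⟨f, g, Hf, Hg, K, hA, hSo, hHole, μ, hμ, hEeF, hEeG, hCa, hKne, hKI, hKmin⟩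
  exact ⟨hKne, C.K_compact, C.perfect_K, C.totdis⟩

end IFSPaper
end
end
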